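/- Let G be a simple 1-dof Henneberg-I graph with base non-edge (v1, v2), and construction step v_n ◁ (u, w) for the last vertex, where at least three vertices u1, u2, u3 are constructed directly on (v1, v2), and G is 1-path. Then the extreme graph G ∪ {(u,w)} is not Triangle-decomposable. -/

import Mathlib

open SimpleGraph

variable {α : Type*} [DecidableEq α]

/-- Validity of a Henneberg-I construction sequence (list of steps `(v, u, w)` meaning
`v ◁ (u, w)`) starting from the vertex set `S`. -/
def ValidFrom (S : Finset α) : List (α × α × α) → Prop
  | [] => True
  | (v, u, w) :: rest => v ∉ S ∧ u ∈ S ∧ w ∈ S ∧ u ≠ w ∧ ValidFrom (insert v S) rest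

/-- The vertex set built by a Henneberg-I construction from base edge `(a, b)`. -/
def buildVerts (a b : α) (l : List (α × α × α)) : Finset α :=
  l.foldl (fun s p => insert p.1 s) {a, b}

/-- The edge set built by a Henneberg-I construction from base edge `(a, b)`. -/
def buildEdges (a b : α) (l : List (α × α × α)) : Finset (Sym2 α) :=
  l.foldl (fun s p => insert s(p.1, p.2.1) (insert s(p.1, p.2.2) s)) {s(a, b)}

/-- `(V, E)` is a Henneberg-I graph with base edge `(a, b)`. -/
def IsHennebergI (V : Finset α) (E : Finset (Sym2 α)) (a b : α) : Prop :=
  a ≠ b ∧ ∃ l, ValidFrom {a, b} l ∧ V = buildVerts a b l ∧ E = buildEdges a b l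

/-- `(V, E)` is a simple 1-dof Henneberg-I graph with base non-edge `(a, b)`:
adding back the base edge `(a, b)` gives a Henneberg-I graph with base edge `(a, b)`. -/
def IsSimple1Dof (V : Finset α) (E : Finset (Sym2 α)) (a b : α) : Prop :=
  s(a, b) ∉ E ∧ IsHennebergI V (insert s(a, b) E) a b

/-- `(V', E')` is a subgraph of `(V, E)`. -/
def IsSubgraphOf (V : Finset α) (E : Finset (Sym2 α)) (V' : Finset α)
    (E' : Finset (Sym2 α)) : Prop :=
  V' ⊆ V ∧ E' ⊆ E ∧ ∀ e ∈ E', ∀ v ∈ e, v ∈ V'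

/-- `(V, E)` is wellconstrained (Laman): `|E| = 2|V| - 3` and every subgraph on `m`
vertices has at most `2m - 3` edges. -/
def IsLaman (V : Finset α) (E : Finset (Sym2 α)) : Prop :=
  E.card + 3 = 2 * V.card ∧
  ∀ V' E', IsSubgraphOf V E V' E' → E'.card ≤ 2 * V'.card - 3

/-- The degree of the vertex `x` in the edge set `E`. -/
def degreeIn (E : Finset (Sym2 α)) (x : α) : ℕ := (E.filter (fun e => x ∈ e)).card

/-- A step `p = (v, u, w)` is constructed directly on the base pair `(a, b)`. -/
def OnBase (a b : α) (p : α × α × α) : Prop :=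
  (p.2.1 = a ∧ p.2.2 = b) ∨ (p.2.1 = b ∧ p.2.2 = a)

/-- The 1-path property: exactly one vertex other than `a` and `b` has degree 2. -/
def OnePath (V : Finset α) (E : Finset (Sym2 α)) (a b : α) : Prop :=
  ∃! x, x ∈ V ∧ x ≠ a ∧ x ≠ b ∧ degreeIn E x = 2

/-- Triangle-decomposability of a graph `(V, E)`. -/
inductive TriDecomp : Finset α → Finset (Sym2 α) → Prop
  | edge (u v : α) (h : u ≠ v) : TriDecomp {u, v} {s(u, v)}
  | triangle (u v w : α) (huv : u ≠ v) (hvw : v ≠ w) (huw : u ≠ w) :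
      TriDecomp {u, v, w} {s(u, v), s(v, w), s(u, w)}
  | merge (V1 V2 V3 : Finset α) (E1 E2 E3 : Finset (Sym2 α)) (v1 v2 v3 : α)
      (h12 : v1 ≠ v2) (h23 : v2 ≠ v3) (h13 : v1 ≠ v3)
      (t1 : TriDecomp V1 E1) (t2 : TriDecomp V2 E2) (t3 : TriDecomp V3 E3)
      (i12 : V1 ∩ V2 = {v3}) (i23 : V2 ∩ V3 = {v1}) (i13 : V1 ∩ V3 = {v2})
      (e12 : E1 ∩ E2 = ∅) (e23 : E2 ∩ E3 = ∅) (e13 : E1 ∩ E3 = ∅) :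
      TriDecomp (V1 ∪ V2 ∪ V3) (E1 ∪ E2 ∪ E3)

/-- `H` is a minor of `G`: branch-set definition. -/
def HasMinor {V W : Type*} (G : SimpleGraph V) (H : SimpleGraph W) : Prop :=
  ∃ f : W → Set V,
    (∀ w, (f w).Nonempty) ∧
    (∀ w, (G.induce (f w)).Connected) ∧
    (∀ w w', w ≠ w' → Disjoint (f w) (f w')) ∧
    ∀ w w', H.Adj w w' → ∃ x ∈ f w, ∃ y ∈ f w', G.Adj x y



instance (a b : α) : DecidablePred (OnBase a b) := fun p => by
  unfold OnBase; infer_instance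

namespace Stmt11Aux

variable {α : Type*} [DecidableEq α]

/-! ### Generic foldl lemmas -/

lemma mem_vfold (l : List (α × α × α)) (s : Finset α) (x : α) :
    x ∈ l.foldl (fun s p => insert p.1 s) s ↔ x ∈ s ∨ ∃ p ∈ l, x = p.1 := by
  induction l generalizing s with
  | nil => simp
  | cons q t ih =>
    simp only [List.foldl_cons, ih, Finset.mem_insert, List.mem_cons]
    constructor
    · rintro (( h | h) | ⟨p, hp, h⟩)
      · exact Or.inr ⟨q, Or.inl rfl, h⟩
      · exact Or.inl h
      · exact Or.inr ⟨p, Or.inr hp, h⟩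
    · rintro (h | ⟨p, (rfl | hp), h⟩)
      · exact Or.inl (Or.inr h)
      · exact Or.inl (Or.inl h)
      · exact Or.inr ⟨p, hp, h⟩

lemma mem_efold (l : List (α × α × α)) (s : Finset (Sym2 α)) (e : Sym2 α) :
    e ∈ l.foldl (fun s p => insert s(p.1, p.2.1) (insert s(p.1, p.2.2) s)) s ↔
      e ∈ s ∨ ∃ p ∈ l, e = s(p.1, p.2.1) ∨ e = s(p.1, p.2.2) := by
  induction l generalizing s with
  | nil => simp
  | cons q t ih =>
    simp only [List.foldl_cons, ih, Finset.mem_insert, List.mem_cons]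
    constructor
    · rintro ((h | h | h) | ⟨p, hp, h⟩)
      · exact Or.inr ⟨q, Or.inl rfl, Or.inl h⟩
      · exact Or.inr ⟨q, Or.inl rfl, Or.inr h⟩
      · exact Or.inl h
      · exact Or.inr ⟨p, Or.inr hp, h⟩
    · rintro (h | ⟨p, (rfl | hp), h⟩)
      · exact Or.inl (Or.inr (Or.inr h))
      · rcases h with h | h
        · exact Or.inl (Or.inl h)
        · exact Or.inl (Or.inr (Or.inl h))
      · exact Or.inr ⟨p, hp, h⟩

end Stmt11Aux
namespace Stmt11Aux

variable {α : Type*} [DecidableEq α]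

abbrev vfold (l : List (α × α × α)) (s : Finset α) : Finset α :=
  l.foldl (fun s p => insert p.1 s) s

lemma valid_append {l1 l2 : List (α × α × α)} {S : Finset α} :
    ValidFrom S (l1 ++ l2) ↔ ValidFrom S l1 ∧ ValidFrom (vfold l1 S) l2 := by
  induction l1 generalizing S with
  | nil => simp [ValidFrom, vfold]
  | cons q t ih =>
    obtain ⟨v, u, w⟩ := q
    simp only [List.cons_append, ValidFrom, ih, vfold, List.foldl_cons, List.append_eq]
    tauto

lemma apex_not_mem {l : List (α × α × α)} {S : Finset α} (h : ValidFrom S l) :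
    ∀ p ∈ l, p.1 ∉ S := by
  induction l generalizing S with
  | nil => simp
  | cons q t ih =>
    obtain ⟨v, u, w⟩ := q
    obtain ⟨hv, hu, hw, huw, ht⟩ := h
    intro p hp
    rcases List.mem_cons.mp hp with rfl | hp
    · exact hv
    · intro hmem
      exact ih ht p hp (Finset.mem_insert_of_mem hmem)

lemma apex_nodup {l : List (α × α × α)} {S : Finset α} (h : ValidFrom S l) :
    (l.map Prod.fst).Nodup := by
  induction l generalizing S with
  | nil => simp
  | cons q t ih =>
    obtain ⟨v, u, w⟩ := q
    obtain ⟨hv, hu, hw, huw, ht⟩ := h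
    simp only [List.map_cons, List.nodup_cons]
    refine ⟨fun hmem => ?_, ih ht⟩
    obtain ⟨p, hp, hpv⟩ := List.mem_map.mp hmem
    exact apex_not_mem ht p hp (hpv ▸ Finset.mem_insert_self _ _)

lemma step_facts {l l1 l2 : List (α × α × α)} {p : α × α × α} {S : Finset α}
    (h : ValidFrom S l) (hsplit : l = l1 ++ p :: l2) :
    p.1 ∉ vfold l1 S ∧ p.2.1 ∈ vfold l1 S ∧ p.2.2 ∈ vfold l1 S ∧ p.2.1 ≠ p.2.2 := by
  rw [hsplit] at h
  have h2 := (valid_append.mp h).2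
  obtain ⟨v, u, w⟩ := p
  obtain ⟨hv, hu, hw, huw, _⟩ := h2
  exact ⟨hv, hu, hw, huw⟩

lemma vfold_subset (l : List (α × α × α)) (S : Finset α) : S ⊆ vfold l S := by
  intro x hx; rw [mem_vfold]; exact Or.inl hx

end Stmt11Aux
namespace Stmt11Aux

variable {α : Type*} [DecidableEq α]

def names (v1 v2 : α) (l : List (α × α × α)) : List α := v1 :: v2 :: l.map Prod.fst

def rk (v1 v2 : α) (l : List (α × α × α)) (x : α) : ℕ := (names v1 v2 l).idxOf x

section Basic

variable {v1 v2 : α} {l : List (α × α × α)}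

lemma apex_ne_base (hl : ValidFrom {v1, v2} l) {p : α × α × α} (hp : p ∈ l) :
    p.1 ≠ v1 ∧ p.1 ≠ v2 := by
  have := apex_not_mem hl p hp
  constructor
  · rintro rfl; exact this (Finset.mem_insert_self _ _)
  · rintro rfl; exact this (Finset.mem_insert_of_mem (Finset.mem_singleton_self _))

lemma names_nodup (hab : v1 ≠ v2) (hl : ValidFrom {v1, v2} l) :
    (names v1 v2 l).Nodup := by
  have hnd := apex_nodup hl
  have h1 : v1 ∉ l.map Prod.fst := by
    intro h
    obtain ⟨p, hp, hpv⟩ := List.mem_map.mp h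
    exact (apex_ne_base hl hp).1 hpv
  have h2 : v2 ∉ l.map Prod.fst := by
    intro h
    obtain ⟨p, hp, hpv⟩ := List.mem_map.mp h
    exact (apex_ne_base hl hp).2 hpv
  simp only [names, List.nodup_cons, List.mem_cons]
  exact ⟨by tauto, h2, hnd⟩

lemma buildVerts_eq :
    buildVerts v1 v2 l = ({v1, v2} : Finset α) ∪ (l.map Prod.fst).toFinset := by
  ext x
  simp only [buildVerts, mem_vfold, Finset.mem_union, List.mem_toFinset, List.mem_map]
  constructor
  · rintro (h | ⟨p, hp, rfl⟩)
    · exact Or.inl h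
    · exact Or.inr ⟨p, hp, rfl⟩
  · rintro (h | ⟨p, hp, rfl⟩)
    · exact Or.inl h
    · exact Or.inr ⟨p, hp, rfl⟩

lemma mem_V_cases {x : α} (hx : x ∈ buildVerts v1 v2 l) :
    x = v1 ∨ x = v2 ∨ ∃ p ∈ l, x = p.1 := by
  rw [buildVerts_eq] at hx
  rcases Finset.mem_union.mp hx with h | h
  · rcases Finset.mem_insert.mp h with h | h
    · exact Or.inl h
    · exact Or.inr (Or.inl (Finset.mem_singleton.mp h))
  · obtain ⟨p, hp, hpx⟩ := List.mem_map.mp (List.mem_toFinset.mp h)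
    exact Or.inr (Or.inr ⟨p, hp, hpx.symm⟩)

lemma base_mem_V : v1 ∈ buildVerts v1 v2 l ∧ v2 ∈ buildVerts v1 v2 l := by
  rw [buildVerts_eq]
  constructor
  · exact Finset.mem_union_left _ (Finset.mem_insert_self _ _)
  · exact Finset.mem_union_left _ (Finset.mem_insert_of_mem (Finset.mem_singleton_self _))

lemma apex_mem_V {p : α × α × α} (hp : p ∈ l) : p.1 ∈ buildVerts v1 v2 l := by
  rw [buildVerts_eq]
  exact Finset.mem_union_right _ (List.mem_toFinset.mpr (List.mem_map_of_mem hp))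

lemma vfold_mem_V {l1 l2 : List (α × α × α)} (hsplit : l = l1 ++ l2) {x : α}
    (hx : x ∈ vfold l1 ({v1, v2} : Finset α)) : x ∈ buildVerts v1 v2 l := by
  rw [mem_vfold] at hx
  rcases hx with h | ⟨p, hp, rfl⟩
  · rw [buildVerts_eq]; exact Finset.mem_union_left _ h
  · exact apex_mem_V (by rw [hsplit]; exact List.mem_append_left _ hp)

lemma src_mem_V (hl : ValidFrom {v1, v2} l) {p : α × α × α} (hp : p ∈ l) :
    p.2.1 ∈ buildVerts v1 v2 l ∧ p.2.2 ∈ buildVerts v1 v2 l := by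
  obtain ⟨l1, l2, hsplit⟩ := List.append_of_mem hp
  obtain ⟨_, h1, h2, _⟩ := step_facts hl hsplit
  exact ⟨vfold_mem_V hsplit h1, vfold_mem_V hsplit h2⟩

lemma mem_names_of_mem_V {x : α} (hx : x ∈ buildVerts v1 v2 l) :
    x ∈ names v1 v2 l := by
  rcases mem_V_cases hx with rfl | rfl | ⟨p, hp, rfl⟩
  · exact List.mem_cons_self
  · exact List.mem_cons_of_mem _ (List.mem_cons_self)
  · exact List.mem_cons_of_mem _ (List.mem_cons_of_mem _ (List.mem_map_of_mem hp))

lemma rk_inj (hab : v1 ≠ v2) (hl : ValidFrom {v1, v2} l) {x y : α}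
    (hx : x ∈ buildVerts v1 v2 l) (hy : y ∈ buildVerts v1 v2 l)
    (h : rk v1 v2 l x = rk v1 v2 l y) : x = y := by
  have hx' := mem_names_of_mem_V hx
  have hy' := mem_names_of_mem_V hy
  exact (List.idxOf_inj hx').mp h

lemma names_split {l1 l2 : List (α × α × α)} {p : α × α × α} (hsplit : l = l1 ++ p :: l2) :
    names v1 v2 l = (v1 :: v2 :: l1.map Prod.fst) ++ (p.1 :: l2.map Prod.fst) := by
  rw [names, hsplit]
  simp

lemma rk_apex (hl : ValidFrom {v1, v2} l) {l1 l2 : List (α × α × α)} {p : α × α × α}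
    (hsplit : l = l1 ++ p :: l2) : rk v1 v2 l p.1 = 2 + l1.length := by
  have hnm : p.1 ∉ (v1 :: v2 :: l1.map Prod.fst) := by
    intro h
    have h1 := (step_facts hl hsplit).1
    apply h1
    rw [mem_vfold]
    rcases List.mem_cons.mp h with h | h
    · exact Or.inl (h ▸ Finset.mem_insert_self _ _)
    rcases List.mem_cons.mp h with h | h
    · exact Or.inl (h ▸ Finset.mem_insert_of_mem (Finset.mem_singleton_self _))
    · obtain ⟨q, hq, hqp⟩ := List.mem_map.mp h
      exact Or.inr ⟨q, hq, hqp.symm⟩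
  rw [rk, names_split hsplit, List.idxOf_append_of_notMem hnm]
  simp only [List.idxOf_cons_self, List.length_cons, List.length_map]
  omega

lemma rk_lt_of_mem_vfold (hl : ValidFrom {v1, v2} l) {l1 l2 : List (α × α × α)}
    {p : α × α × α} (hsplit : l = l1 ++ p :: l2) {x : α}
    (hx : x ∈ vfold l1 ({v1, v2} : Finset α)) : rk v1 v2 l x < rk v1 v2 l p.1 := by
  rw [rk_apex hl hsplit]
  have hxm : x ∈ (v1 :: v2 :: l1.map Prod.fst) := by
    rw [mem_vfold] at hx
    rcases hx with h | ⟨q, hq, rfl⟩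
    · rcases Finset.mem_insert.mp h with rfl | h
      · exact List.mem_cons_self
      · exact List.mem_cons_of_mem _ (Finset.mem_singleton.mp h ▸ List.mem_cons_self)
    · exact List.mem_cons_of_mem _ (List.mem_cons_of_mem _ (List.mem_map_of_mem hq))
  calc rk v1 v2 l x = (v1 :: v2 :: l1.map Prod.fst).idxOf x := by
        rw [rk, names_split hsplit, List.idxOf_append_of_mem hxm]
    _ < (v1 :: v2 :: l1.map Prod.fst).length := List.idxOf_lt_length_iff.mpr hxm
    _ = 2 + l1.length := by simp only [List.length_cons, List.length_map]; omega

lemma rk_src_lt (hl : ValidFrom {v1, v2} l) {l1 l2 : List (α × α × α)} {p : α × α × α}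
    (hsplit : l = l1 ++ p :: l2) :
    rk v1 v2 l p.2.1 < rk v1 v2 l p.1 ∧ rk v1 v2 l p.2.2 < rk v1 v2 l p.1 := by
  obtain ⟨_, h1, h2, _⟩ := step_facts hl hsplit
  exact ⟨rk_lt_of_mem_vfold hl hsplit h1, rk_lt_of_mem_vfold hl hsplit h2⟩

lemma step_unique (hl : ValidFrom {v1, v2} l) {p q : α × α × α}
    (hp : p ∈ l) (hq : q ∈ l) (h : p.1 = q.1) : p = q :=
  List.inj_on_of_nodup_map (apex_nodup hl) hp hq h

end Basic

end Stmt11Aux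
namespace Stmt11Aux

variable {α : Type*} [DecidableEq α]

section Edges

variable {v1 v2 : α} {l : List (α × α × α)}

lemma mem_buildEdges {e : Sym2 α} :
    e ∈ buildEdges v1 v2 l ↔
      e = s(v1, v2) ∨ ∃ p ∈ l, e = s(p.1, p.2.1) ∨ e = s(p.1, p.2.2) := by
  rw [buildEdges, mem_efold]
  simp

lemma edge_supp (hl : ValidFrom {v1, v2} l) {e : Sym2 α} (he : e ∈ buildEdges v1 v2 l) :
    ∀ x ∈ e, x ∈ buildVerts v1 v2 l := by
  intro x hx
  rcases mem_buildEdges.mp he with rfl | ⟨p, hp, (rfl | rfl)⟩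
  · rcases Sym2.mem_iff.mp hx with rfl | rfl
    · exact (base_mem_V).1
    · exact (base_mem_V).2
  · rcases Sym2.mem_iff.mp hx with rfl | rfl
    · exact apex_mem_V hp
    · exact (src_mem_V hl hp).1
  · rcases Sym2.mem_iff.mp hx with rfl | rfl
    · exact apex_mem_V hp
    · exact (src_mem_V hl hp).2

lemma pair_mem (hl : ValidFrom {v1, v2} l) {p : α × α × α} (hp : p ∈ l) :
    s(p.1, p.2.1) ∈ (buildEdges v1 v2 l).erase s(v1, v2) ∧
      s(p.1, p.2.2) ∈ (buildEdges v1 v2 l).erase s(v1, v2) := by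
  have hne := apex_ne_base hl hp
  constructor <;> refine Finset.mem_erase.mpr ⟨?_, mem_buildEdges.mpr (Or.inr ⟨p, hp, by simp⟩)⟩
  · intro h
    rcases Sym2.eq_iff.mp h with ⟨h1, _⟩ | ⟨h1, _⟩
    · exact hne.1 h1
    · exact hne.2 h1
  · intro h
    rcases Sym2.eq_iff.mp h with ⟨h1, _⟩ | ⟨h1, _⟩
    · exact hne.1 h1
    · exact hne.2 h1

lemma edge_rep {e : Sym2 α} (he : e ∈ (buildEdges v1 v2 l).erase s(v1, v2)) :
    ∃ p ∈ l, e = s(p.1, p.2.1) ∨ e = s(p.1, p.2.2) := by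
  obtain ⟨hne, hmem⟩ := Finset.mem_erase.mp he
  rcases mem_buildEdges.mp hmem with h | h
  · exact absurd h hne
  · exact h

lemma src_ne_apex (hl : ValidFrom {v1, v2} l) {p : α × α × α} (hp : p ∈ l) :
    p.2.1 ≠ p.1 ∧ p.2.2 ≠ p.1 := by
  obtain ⟨l1, l2, hsplit⟩ := List.append_of_mem hp
  obtain ⟨h0, h1, h2, _⟩ := step_facts hl hsplit
  exact ⟨fun h => h0 (h ▸ h1), fun h => h0 (h ▸ h2)⟩

lemma edge_at (hl : ValidFrom {v1, v2} l) {e : Sym2 α} {x : α}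
    (he : e ∈ (buildEdges v1 v2 l).erase s(v1, v2)) (hx : x ∈ e) :
    ∃ p ∈ l, (x = p.1 ∧ (e = s(x, p.2.1) ∨ e = s(x, p.2.2))) ∨
      (e = s(p.1, x) ∧ rk v1 v2 l x < rk v1 v2 l p.1) := by
  obtain ⟨p, hp, hrep⟩ := edge_rep he
  obtain ⟨l1, l2, hsplit⟩ := List.append_of_mem hp
  have hlt := rk_src_lt hl hsplit
  rcases hrep with rfl | rfl
  · rcases Sym2.mem_iff.mp hx with rfl | rfl
    · exact ⟨p, hp, Or.inl ⟨rfl, Or.inl rfl⟩⟩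
    · exact ⟨p, hp, Or.inr ⟨rfl, hlt.1⟩⟩
  · rcases Sym2.mem_iff.mp hx with rfl | rfl
    · exact ⟨p, hp, Or.inl ⟨rfl, Or.inr rfl⟩⟩
    · exact ⟨p, hp, Or.inr ⟨rfl, hlt.2⟩⟩

lemma efold_card : ∀ (l : List (α × α × α)) (S : Finset α) (E0 : Finset (Sym2 α)),
    ValidFrom S l → (∀ e ∈ E0, ∀ x ∈ e, x ∈ S) →
    (l.foldl (fun s p => insert s(p.1, p.2.1) (insert s(p.1, p.2.2) s)) E0).card =
      E0.card + 2 * l.length := by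
  intro l
  induction l with
  | nil => intro S E0 _ _; simp
  | cons q t ih =>
    intro S E0 hval hsupp
    obtain ⟨v, u, w⟩ := q
    obtain ⟨hv, hu, hw, huw, ht⟩ := hval
    have hvu : s(v, u) ∉ (insert s(v, w) E0) := by
      intro h
      rcases Finset.mem_insert.mp h with h | h
      · rcases Sym2.eq_iff.mp h with ⟨_, h2⟩ | ⟨h1, _⟩
        · exact huw h2
        · exact hv (h1 ▸ hw)
      · exact hv (hsupp _ h v (Sym2.mem_mk_left _ _))
    have hvw : s(v, w) ∉ E0 := fun h => hv (hsupp _ h v (Sym2.mem_mk_left _ _))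
    have hsupp' : ∀ e ∈ insert s(v, u) (insert s(v, w) E0), ∀ x ∈ e, x ∈ insert v S := by
      intro e he x hx
      rcases Finset.mem_insert.mp he with rfl | he
      · rcases Sym2.mem_iff.mp hx with rfl | rfl
        · exact Finset.mem_insert_self _ _
        · exact Finset.mem_insert_of_mem hu
      rcases Finset.mem_insert.mp he with rfl | he
      · rcases Sym2.mem_iff.mp hx with rfl | rfl
        · exact Finset.mem_insert_self _ _
        · exact Finset.mem_insert_of_mem hw
      · exact Finset.mem_insert_of_mem (hsupp e he x hx)
    have := ih (insert v S) _ ht hsupp'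
    rw [List.foldl_cons] at *
    rw [this, Finset.card_insert_of_notMem hvu, Finset.card_insert_of_notMem hvw]
    simp only [List.length_cons]
    ring

lemma card_buildEdges (hl : ValidFrom {v1, v2} l) :
    (buildEdges v1 v2 l).card = 2 * l.length + 1 := by
  have h := efold_card l {v1, v2} {s(v1, v2)} hl ?_
  · rw [buildEdges, h, Finset.card_singleton]; ring
  · intro e he x hx
    rw [Finset.mem_singleton] at he
    subst he
    rcases Sym2.mem_iff.mp hx with rfl | rfl
    · exact Finset.mem_insert_self _ _
    · exact Finset.mem_insert_of_mem (Finset.mem_singleton_self _)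

lemma base_mem_buildEdges : s(v1, v2) ∈ buildEdges v1 v2 l :=
  mem_buildEdges.mpr (Or.inl rfl)

lemma card_Ee (hl : ValidFrom {v1, v2} l) :
    ((buildEdges v1 v2 l).erase s(v1, v2)).card = 2 * l.length := by
  rw [Finset.card_erase_of_mem base_mem_buildEdges, card_buildEdges hl]
  omega

lemma card_buildVerts (hab : v1 ≠ v2) (hl : ValidFrom {v1, v2} l) :
    (buildVerts v1 v2 l).card = l.length + 2 := by
  rw [buildVerts_eq]
  have hd : Disjoint ({v1, v2} : Finset α) (l.map Prod.fst).toFinset := by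
    rw [Finset.disjoint_left]
    intro a ha hmem
    obtain ⟨p, hp, hpa⟩ := List.mem_map.mp (List.mem_toFinset.mp hmem)
    rcases Finset.mem_insert.mp ha with rfl | ha
    · exact (apex_ne_base hl hp).1 hpa
    · rw [Finset.mem_singleton] at ha
      exact (apex_ne_base hl hp).2 (ha ▸ hpa)
  rw [Finset.card_union_of_disjoint hd, List.toFinset_card_of_nodup (apex_nodup hl)]
  rw [Finset.card_insert_of_notMem (by simp [hab]), Finset.card_singleton, List.length_map]
  ring

lemma filter_apex_len {l : List (α × α × α)} (h : (l.map Prod.fst).Nodup) (x : α) :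
    (l.filter (fun p => p.1 = x)).length ≤ 1 := by
  induction l with
  | nil => simp
  | cons q t ih =>
    simp only [List.map_cons, List.nodup_cons] at h
    obtain ⟨hq, ht⟩ := h
    by_cases hqx : q.1 = x
    · have : t.filter (fun p => p.1 = x) = [] := by
        rw [List.filter_eq_nil_iff]
        intro p hp hpx
        exact hq (List.mem_map.mpr ⟨p, hp, by simp at hpx; rw [hpx, hqx]⟩)
      simp [List.filter_cons, hqx, this]
    · simp only [List.filter_cons, hqx, decide_false, if_false]
      simpa using ih ht

lemma count_le (hl : ValidFrom {v1, v2} l) {F : Finset (Sym2 α)} {W : Finset α}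
    (hFE : F ⊆ (buildEdges v1 v2 l).erase s(v1, v2))
    (hsupp : ∀ e ∈ F, ∀ x ∈ e, x ∈ W) :
    F.card ≤ 2 * (W ∩ (l.map Prod.fst).toFinset).card := by
  classical
  set T := W ∩ (l.map Prod.fst).toFinset with hT
  set pE : α → Finset (Sym2 α) := fun x =>
    ((l.filter (fun p => p.1 = x)).map (fun p => s(p.1, p.2.1))).toFinset ∪
    ((l.filter (fun p => p.1 = x)).map (fun p => s(p.1, p.2.2))).toFinset with hpE
  have hsub : F ⊆ T.biUnion pE := by
    intro e he
    obtain ⟨p, hp, hrep⟩ := edge_rep (hFE he)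
    have hpx : p.1 ∈ e := by rcases hrep with rfl | rfl <;> exact Sym2.mem_mk_left _ _
    have hpW : p.1 ∈ W := hsupp e he p.1 hpx
    have hpT : p.1 ∈ T := by
      rw [hT, Finset.mem_inter]
      exact ⟨hpW, List.mem_toFinset.mpr (List.mem_map_of_mem hp)⟩
    refine Finset.mem_biUnion.mpr ⟨p.1, hpT, ?_⟩
    have hpf : p ∈ l.filter (fun p' => p'.1 = p.1) := by
      rw [List.mem_filter]; simp [hp]
    rcases hrep with rfl | rfl
    · exact Finset.mem_union_left _ (List.mem_toFinset.mpr (List.mem_map_of_mem hpf))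
    · exact Finset.mem_union_right _ (List.mem_toFinset.mpr (List.mem_map_of_mem hpf))
  calc F.card ≤ (T.biUnion pE).card := Finset.card_le_card hsub
    _ ≤ ∑ x ∈ T, (pE x).card := Finset.card_biUnion_le
    _ ≤ ∑ _x ∈ T, 2 := by
      refine Finset.sum_le_sum ?_
      intro x _
      rw [hpE]
      calc (((l.filter (fun p => p.1 = x)).map (fun p => s(p.1, p.2.1))).toFinset ∪
            ((l.filter (fun p => p.1 = x)).map (fun p => s(p.1, p.2.2))).toFinset).card
          ≤ _ + _ := Finset.card_union_le _ _
        _ ≤ 2 := by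
          have h1 := List.toFinset_card_le ((l.filter (fun p => p.1 = x)).map (fun p => s(p.1, p.2.1)))
          have h2 := List.toFinset_card_le ((l.filter (fun p => p.1 = x)).map (fun p => s(p.1, p.2.2)))
          rw [List.length_map] at h1 h2
          have := filter_apex_len (apex_nodup hl) x
          omega
    _ = 2 * T.card := by rw [Finset.sum_const, smul_eq_mul, mul_comm]

end Edges

end Stmt11Aux
namespace Stmt11Aux

variable {α : Type*} [DecidableEq α]

lemma sym2_ne_of_ne {a b c d : α} (h1 : ¬(a = c ∧ b = d)) (h2 : ¬(a = d ∧ b = c)) :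
    s(a, b) ≠ s(c, d) := by
  intro h
  rcases Sym2.eq_iff.mp h with h | h
  · exact h1 h
  · exact h2 h

lemma sym2_eq_of_mem {t1 t2 : α} (h : t1 ≠ t2) {f : Sym2 α} (h1 : t1 ∈ f) (h2 : t2 ∈ f) :
    f = s(t1, t2) := by
  induction f with
  | _ x y =>
    rcases Sym2.mem_iff.mp h1 with rfl | rfl <;> rcases Sym2.mem_iff.mp h2 with rfl | rfl
    · exact absurd rfl h
    · rfl
    · exact Sym2.eq_swap
    · exact absurd rfl h

lemma pair_finset_eq {a b c d : α} (hab : a ≠ b) (hcd : c ≠ d)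
    (h : ({a, b} : Finset α) = {c, d}) : (a = c ∧ b = d) ∨ (a = d ∧ b = c) := by
  have ha : a ∈ ({c, d} : Finset α) := h ▸ Finset.mem_insert_self _ _
  have hb : b ∈ ({c, d} : Finset α) :=
    h ▸ Finset.mem_insert_of_mem (Finset.mem_singleton_self _)
  simp only [Finset.mem_insert, Finset.mem_singleton] at ha hb
  rcases ha with rfl | rfl <;> rcases hb with rfl | rfl
  · exact absurd rfl hab
  · exact Or.inl ⟨rfl, rfl⟩
  · exact Or.inr ⟨rfl, rfl⟩
  · exact absurd rfl hab

lemma degreeIn_mono {E F : Finset (Sym2 α)} (h : E ⊆ F) (x : α) :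
    degreeIn E x ≤ degreeIn F x :=
  Finset.card_le_card (Finset.filter_subset_filter _ h)

lemma td_card {V : Finset α} {E : Finset (Sym2 α)} (h : TriDecomp V E) :
    E.card + 3 = 2 * V.card := by
  induction h with
  | edge u v huv =>
    rw [Finset.card_singleton, Finset.card_insert_of_notMem (by simp [huv]),
      Finset.card_singleton]
  | triangle u v w huv hvw huw =>
    have h1 : s(u, v) ≠ s(v, w) := sym2_ne_of_ne (by tauto) (by tauto)
    have h2 : s(u, v) ≠ s(u, w) := sym2_ne_of_ne (by tauto) (by tauto)
    have h3 : s(v, w) ≠ s(u, w) := sym2_ne_of_ne (by tauto) (by tauto)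
    rw [Finset.card_insert_of_notMem (by simp [h1, h2]),
      Finset.card_insert_of_notMem (by simp [h3]), Finset.card_singleton,
      Finset.card_insert_of_notMem (by simp [huv, huw]),
      Finset.card_insert_of_notMem (by simp [hvw]), Finset.card_singleton]
  | merge V1 V2 V3 E1 E2 E3 c1 c2 c3 h12 h23 h13 t1 t2 t3 i12 i23 i13 d12 d23 d13 ih1 ih2 ih3 =>
    have hv12 : (V1 ∪ V2).card + 1 = V1.card + V2.card := by
      have := Finset.card_union_add_card_inter V1 V2
      rw [i12, Finset.card_singleton] at this
      omega
    have hv3 : ((V1 ∪ V2) ∩ V3) = {c2, c1} := by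
      rw [Finset.union_inter_distrib_right, i13, i23]
      rfl
    have hv123 : (V1 ∪ V2 ∪ V3).card + 2 = (V1 ∪ V2).card + V3.card := by
      have := Finset.card_union_add_card_inter (V1 ∪ V2) V3
      rw [hv3] at this
      have hc : ({c2, c1} : Finset α).card = 2 := by
        rw [Finset.card_insert_of_notMem (by simp [h12.symm, Ne.symm]), Finset.card_singleton]
      omega
    have he12 : (E1 ∪ E2).card = E1.card + E2.card := by
      have := Finset.card_union_add_card_inter E1 E2
      rw [d12, Finset.card_empty] at this
      omega
    have he123 : (E1 ∪ E2 ∪ E3).card = (E1 ∪ E2).card + E3.card := by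
      have := Finset.card_union_add_card_inter (E1 ∪ E2) E3
      rw [Finset.union_inter_distrib_right, d13, d23, Finset.empty_union,
        Finset.card_empty] at this
      omega
    omega

lemma td_supp {V : Finset α} {E : Finset (Sym2 α)} (h : TriDecomp V E) :
    ∀ e ∈ E, ∀ x ∈ e, x ∈ V := by
  induction h with
  | edge u v huv =>
    intro e he x hx
    rw [Finset.mem_singleton] at he
    subst he
    rcases Sym2.mem_iff.mp hx with rfl | rfl <;> simp
  | triangle u v w huv hvw huw =>
    intro e he x hx
    simp only [Finset.mem_insert, Finset.mem_singleton] at he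
    rcases he with rfl | rfl | rfl <;> rcases Sym2.mem_iff.mp hx with rfl | rfl <;> simp
  | merge V1 V2 V3 E1 E2 E3 c1 c2 c3 h12 h23 h13 t1 t2 t3 i12 i23 i13 d12 d23 d13 ih1 ih2 ih3 =>
    intro e he x hx
    simp only [Finset.mem_union] at he ⊢
    rcases he with (he | he) | he
    · exact Or.inl (Or.inl (ih1 e he x hx))
    · exact Or.inl (Or.inr (ih2 e he x hx))
    · exact Or.inr (ih3 e he x hx)

lemma td_cover {V : Finset α} {E : Finset (Sym2 α)} (h : TriDecomp V E) :
    ∀ x ∈ V, ∃ e ∈ E, x ∈ e := by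
  induction h with
  | edge u v huv =>
    intro x hx
    refine ⟨s(u, v), Finset.mem_singleton_self _, ?_⟩
    simp only [Finset.mem_insert, Finset.mem_singleton] at hx
    rcases hx with rfl | rfl <;> simp
  | triangle u v w huv hvw huw =>
    intro x hx
    simp only [Finset.mem_insert, Finset.mem_singleton] at hx
    rcases hx with rfl | rfl | rfl
    · exact ⟨s(x, v), by simp, Sym2.mem_mk_left _ _⟩
    · exact ⟨s(u, x), by simp, Sym2.mem_mk_right _ _⟩
    · exact ⟨s(v, x), by simp, Sym2.mem_mk_right _ _⟩
  | merge V1 V2 V3 E1 E2 E3 c1 c2 c3 h12 h23 h13 t1 t2 t3 i12 i23 i13 d12 d23 d13 ih1 ih2 ih3 =>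
    intro x hx
    simp only [Finset.mem_union] at hx
    rcases hx with (hx | hx) | hx
    · obtain ⟨e, he, hxe⟩ := ih1 x hx
      exact ⟨e, by simp [Finset.mem_union, he], hxe⟩
    · obtain ⟨e, he, hxe⟩ := ih2 x hx
      exact ⟨e, by simp [Finset.mem_union, he], hxe⟩
    · obtain ⟨e, he, hxe⟩ := ih3 x hx
      exact ⟨e, by simp [Finset.mem_union, he], hxe⟩

lemma td_cases {V : Finset α} {E : Finset (Sym2 α)} (h : TriDecomp V E) :
    (∃ p q, p ≠ q ∧ V = {p, q} ∧ E = {s(p, q)}) ∨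
    (∃ p q r, p ≠ q ∧ q ≠ r ∧ p ≠ r ∧ V = {p, q, r} ∧ E = {s(p, q), s(q, r), s(p, r)}) ∨
    (∃ V1 V2 V3 E1 E2 E3 c1 c2 c3, c1 ≠ c2 ∧ c2 ≠ c3 ∧ c1 ≠ c3 ∧
      TriDecomp V1 E1 ∧ TriDecomp V2 E2 ∧ TriDecomp V3 E3 ∧
      V1 ∩ V2 = {c3} ∧ V2 ∩ V3 = {c1} ∧ V1 ∩ V3 = {c2} ∧
      E1 ∩ E2 = ∅ ∧ E2 ∩ E3 = ∅ ∧ E1 ∩ E3 = ∅ ∧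
      V = V1 ∪ V2 ∪ V3 ∧ E = E1 ∪ E2 ∪ E3) := by
  cases h with
  | edge u v huv => exact Or.inl ⟨u, v, huv, rfl, rfl⟩
  | triangle u v w huv hvw huw => exact Or.inr (Or.inl ⟨u, v, w, huv, hvw, huw, rfl, rfl⟩)
  | merge V1 V2 V3 E1 E2 E3 c1 c2 c3 h12 h23 h13 t1 t2 t3 i12 i23 i13 d12 d23 d13 =>
    exact Or.inr (Or.inr ⟨V1, V2, V3, E1, E2, E3, c1, c2, c3, h12, h23, h13,
      t1, t2, t3, i12, i23, i13, d12, d23, d13, rfl, rfl⟩)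

end Stmt11Aux
namespace Stmt11Aux

variable {α : Type*} [DecidableEq α]

section Aux

variable {v1 v2 : α} {l : List (α × α × α)}

/-- Classification of a decomposition piece that does not contain the extra edge and
does not contain both base vertices: it is a single edge joining its two shared
vertices, unless it exposes a vertex of degree ≤ 2 whose edges all lie in the piece. -/
lemma aux_piece (hab : v1 ≠ v2) (hl : ValidFrom {v1, v2} l) (u w : α)
    (W : Finset α) (F : Finset (Sym2 α)) (s1 s2 : α) (hs12 : s1 ≠ s2)
    (hFE : F ⊆ (buildEdges v1 v2 l).erase s(v1, v2))
    (hsupp : ∀ e ∈ F, ∀ x ∈ e, x ∈ W)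
    (hcov : ∀ x ∈ W, ∃ e ∈ F, x ∈ e)
    (hcard : F.card + 3 = 2 * W.card)
    (hWV : W ⊆ buildVerts v1 v2 l)
    (hnb : ¬(v1 ∈ W ∧ v2 ∈ W))
    (h12s : ∀ x ∈ W, (x = v1 ∨ x = v2) → x = s1 ∨ x = s2)
    (hout : ∀ x ∈ W, x ≠ s1 → x ≠ s2 →
      ∀ e ∈ insert s(u, w) ((buildEdges v1 v2 l).erase s(v1, v2)), x ∈ e → e ∈ F) :
    (W = {s1, s2} ∧ F = {s(s1, s2)}) ∨
    (∃ y ∈ W, y ≠ v1 ∧ y ≠ v2 ∧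
      degreeIn (insert s(u, w) ((buildEdges v1 v2 l).erase s(v1, v2))) y ≤ 2 ∧
      ∀ e ∈ insert s(u, w) ((buildEdges v1 v2 l).erase s(v1, v2)), y ∈ e → e ∈ F) := by
  classical
  set Ee := (buildEdges v1 v2 l).erase s(v1, v2) with hEe
  set Eh := insert s(u, w) Ee with hEh
  have hW2 : 2 ≤ W.card := by omega
  set A := W.filter (fun x => x ≠ v1 ∧ x ≠ v2) with hA
  have hAW : A ⊆ W := Finset.filter_subset _ _
  have hA_apex : ∀ x ∈ A, ∃ p ∈ l, x = p.1 := by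
    intro x hx
    obtain ⟨hxW, hx1, hx2⟩ := Finset.mem_filter.mp hx
    rcases mem_V_cases (hWV hxW) with rfl | rfl | h
    · exact absurd rfl hx1
    · exact absurd rfl hx2
    · exact h
  have hAne : A.Nonempty := by
    obtain ⟨a, ha, b, hb, hab'⟩ := Finset.one_lt_card.mp (show 1 < W.card by omega)
    by_cases haA : a ∈ A
    · exact ⟨a, haA⟩
    by_cases hbA : b ∈ A
    · exact ⟨b, hbA⟩
    exfalso
    have ha' : a = v1 ∨ a = v2 := by
      by_contra hc
      push_neg at hc
      exact haA (Finset.mem_filter.mpr ⟨ha, hc.1, hc.2⟩)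
    have hb' : b = v1 ∨ b = v2 := by
      by_contra hc
      push_neg at hc
      exact hbA (Finset.mem_filter.mpr ⟨hb, hc.1, hc.2⟩)
    rcases ha' with rfl | rfl <;> rcases hb' with rfl | rfl
    · exact hab' rfl
    · exact hnb ⟨ha, hb⟩
    · exact hnb ⟨hb, ha⟩
    · exact hab' rfl
  -- back-edge sources of an interior vertex of the piece
  have back_src : ∀ z ∈ A, z ≠ s1 → z ≠ s2 →
      ∃ p ∈ l, z = p.1 ∧ p.2.1 ∈ W ∧ p.2.2 ∈ W ∧
        rk v1 v2 l p.2.1 < rk v1 v2 l z ∧ rk v1 v2 l p.2.2 < rk v1 v2 l z ∧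
        p.2.1 ≠ p.2.2 := by
    intro z hz hz1 hz2
    obtain ⟨p, hp, rfl⟩ := hA_apex z hz
    obtain ⟨l1, l2, hsplit⟩ := List.append_of_mem hp
    have hlt := rk_src_lt hl hsplit
    have hzW := hAW hz
    have hpm := pair_mem hl hp
    have h1 : s(p.1, p.2.1) ∈ F :=
      hout p.1 hzW hz1 hz2 _ (Finset.mem_insert_of_mem hpm.1) (Sym2.mem_mk_left _ _)
    have h2 : s(p.1, p.2.2) ∈ F :=
      hout p.1 hzW hz1 hz2 _ (Finset.mem_insert_of_mem hpm.2) (Sym2.mem_mk_left _ _)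
    have hne := (step_facts hl hsplit).2.2.2
    exact ⟨p, hp, rfl, hsupp _ h1 _ (Sym2.mem_mk_right _ _),
      hsupp _ h2 _ (Sym2.mem_mk_right _ _), hlt.1, hlt.2, hne⟩
  obtain ⟨x0, hx0A, hx0min⟩ := Finset.exists_min_image A (rk v1 v2 l) hAne
  obtain ⟨y, hyA, hymax⟩ := Finset.exists_max_image A (rk v1 v2 l) hAne
  have hx0V : x0 ∈ buildVerts v1 v2 l := hWV (hAW hx0A)
  have hyV : y ∈ buildVerts v1 v2 l := hWV (hAW hyA)
  have hx0ne : x0 ≠ v1 ∧ x0 ≠ v2 := by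
    have := Finset.mem_filter.mp hx0A; exact this.2
  have hyne : y ≠ v1 ∧ y ≠ v2 := by
    have := Finset.mem_filter.mp hyA; exact this.2
  -- the oldest interior vertex is shared
  have hx0s : x0 = s1 ∨ x0 = s2 := by
    by_contra hcon
    push_neg at hcon
    obtain ⟨p, hp, hzp, hW1, hW2', hlt1, hlt2, hne⟩ := back_src x0 hx0A hcon.1 hcon.2
    have hsrc : ∀ t, t ∈ W → rk v1 v2 l t < rk v1 v2 l x0 → t = v1 ∨ t = v2 := by
      intro t htW hlt
      by_contra hcon2
      push_neg at hcon2
      have htA : t ∈ A := Finset.mem_filter.mpr ⟨htW, hcon2.1, hcon2.2⟩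
      exact absurd (hx0min t htA) (by omega)
    have h1 := hsrc _ hW1 (hzp ▸ hlt1)
    have h2 := hsrc _ hW2' (hzp ▸ hlt2)
    rcases h1 with h1 | h1 <;> rcases h2 with h2 | h2
    · exact hne (h1.trans h2.symm)
    · exact hnb ⟨h1 ▸ hW1, h2 ▸ hW2'⟩
    · exact hnb ⟨h2 ▸ hW2', h1 ▸ hW1⟩
    · exact hne (h1.trans h2.symm)
  -- the youngest interior vertex is shared, or else it has degree ≤ 2
  by_cases hys : y = s1 ∨ y = s2
  case neg =>
    push_neg at hys
    right
    have hall : ∀ e ∈ Eh, y ∈ e → e ∈ F := hout y (hAW hyA) hys.1 hys.2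
    obtain ⟨py, hpy, hypy⟩ := hA_apex y hyA
    have hdeg : degreeIn Eh y ≤ 2 := by
      have hsub : Eh.filter (fun e => y ∈ e) ⊆ {s(y, py.2.1), s(y, py.2.2)} := by
        intro e he
        obtain ⟨heE, hye⟩ := Finset.mem_filter.mp he
        have heF : e ∈ F := hall e heE hye
        have heEe : e ∈ Ee := hFE heF
        obtain ⟨q, hq, hcase⟩ := edge_at hl heEe hye
        rcases hcase with ⟨hyq, hforms⟩ | ⟨hform, hlt⟩
        · have : q = py := step_unique hl hq hpy (hyq ▸ hypy ▸ rfl)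
          subst this
          rcases hforms with rfl | rfl
          · exact Finset.mem_insert_self _ _
          · exact Finset.mem_insert_of_mem (Finset.mem_singleton_self _)
        · exfalso
          have hq1W : q.1 ∈ W := hsupp e heF q.1 (hform ▸ Sym2.mem_mk_left _ _)
          have hq1A : q.1 ∈ A := by
            have hne := apex_ne_base hl hq
            exact Finset.mem_filter.mpr ⟨hq1W, hne.1, hne.2⟩
          exact absurd (hymax q.1 hq1A) (by omega)
      calc degreeIn Eh y ≤ ({s(y, py.2.1), s(y, py.2.2)} : Finset (Sym2 α)).card :=
            Finset.card_le_card hsub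
        _ ≤ 1 + 1 := by
            refine le_trans (Finset.card_insert_le _ _) ?_
            simp
        _ = 2 := rfl
    exact ⟨y, hAW hyA, hyne.1, hyne.2, hdeg, hall⟩
  case pos =>
  left
  -- now both x0 and y are shared vertices
  by_cases hbase : v1 ∈ W ∨ v2 ∈ W
  · -- piece contains exactly one base vertex va
    obtain ⟨va, hvaW, hva12, hvaonly⟩ :
        ∃ va, va ∈ W ∧ (va = v1 ∨ va = v2) ∧ ∀ z ∈ W, (z = v1 ∨ z = v2) → z = va := by
      rcases hbase with h | h
      · refine ⟨v1, h, Or.inl rfl, ?_⟩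
        rintro z hz (rfl | rfl)
        · rfl
        · exact absurd ⟨h, hz⟩ hnb
      · refine ⟨v2, h, Or.inr rfl, ?_⟩
        rintro z hz (rfl | rfl)
        · exact absurd ⟨hz, h⟩ hnb
        · rfl
    have hvas : va = s1 ∨ va = s2 := h12s va hvaW hva12
    have hx0va : x0 ≠ va := by
      rcases hva12 with rfl | rfl
      · exact hx0ne.1
      · exact hx0ne.2
    have hyva : y ≠ va := by
      rcases hva12 with rfl | rfl
      · exact hyne.1
      · exact hyne.2
    have hyx0 : y = x0 := by
      rcases hvas with rfl | rfl
      · rcases hx0s with h | h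
        · exact absurd h hx0va
        · rcases hys with h' | h'
          · exact absurd h' hyva
          · rw [h', h]
      · rcases hx0s with h | h
        · rcases hys with h' | h'
          · rw [h', h]
          · exact absurd h' hyva
        · exact absurd h hx0va
    have hAx0 : A = {x0} := by
      apply Finset.eq_singleton_iff_unique_mem.mpr
      refine ⟨hx0A, ?_⟩
      intro z hz
      have h1 := hx0min z hz
      have h2 := hymax z hz
      rw [hyx0] at h2
      exact rk_inj hab hl (hWV (hAW hz)) hx0V (le_antisymm h2 h1)
    have hWeq : W = {va, x0} := by
      ext z
      constructor
      · intro hz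
        by_cases hz12 : z = v1 ∨ z = v2
        · rw [hvaonly z hz hz12]; exact Finset.mem_insert_self _ _
        · push_neg at hz12
          have : z ∈ A := Finset.mem_filter.mpr ⟨hz, hz12.1, hz12.2⟩
          rw [hAx0] at this
          rw [Finset.mem_singleton.mp this]
          exact Finset.mem_insert_of_mem (Finset.mem_singleton_self _)
      · intro hz
        rcases Finset.mem_insert.mp hz with rfl | hz
        · exact hvaW
        · rw [Finset.mem_singleton.mp hz]; exact hAW hx0A
    have hWcard : W.card = 2 := by
      rw [hWeq, Finset.card_insert_of_notMem (by simp [Ne.symm hx0va]), Finset.card_singleton]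
    have hFcard : F.card = 1 := by omega
    obtain ⟨f, hf⟩ := Finset.card_eq_one.mp hFcard
    have hvaf : va ∈ f := by
      obtain ⟨e, he, hvae⟩ := hcov va hvaW
      rw [hf, Finset.mem_singleton] at he
      exact he ▸ hvae
    have hx0f : x0 ∈ f := by
      obtain ⟨e, he, hx0e⟩ := hcov x0 (hAW hx0A)
      rw [hf, Finset.mem_singleton] at he
      exact he ▸ hx0e
    have hfeq : f = s(va, x0) := sym2_eq_of_mem (Ne.symm hx0va) hvaf hx0f
    rcases hvas with rfl | rfl
    · have hx0s2 : x0 = s2 := by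
        rcases hx0s with h | h
        · exact absurd h hx0va
        · exact h
      subst hx0s2
      exact ⟨hWeq, by rw [hf, hfeq]⟩
    · have hx0s1 : x0 = s1 := by
        rcases hx0s with h | h
        · exact h
        · exact absurd h hx0va
      subst hx0s1
      refine ⟨by rw [hWeq, Finset.pair_comm], by rw [hf, hfeq, Sym2.eq_swap]⟩
  · -- piece contains no base vertex
    push_neg at hbase
    have hWA : W = A := by
      ext z
      simp only [hA, Finset.mem_filter]
      constructor
      · intro hz
        refine ⟨hz, ?_, ?_⟩
        · rintro rfl; exact hbase.1 hz
        · rintro rfl; exact hbase.2 hz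
      · exact fun h => h.1
    have hx0y : x0 ≠ y := by
      rintro rfl
      have hAx0 : A = {x0} := by
        apply Finset.eq_singleton_iff_unique_mem.mpr
        refine ⟨hx0A, ?_⟩
        intro z hz
        exact rk_inj hab hl (hWV (hAW hz)) hx0V
          (le_antisymm (hymax z hz) (hx0min z hz))
      rw [hWA, hAx0, Finset.card_singleton] at hW2
      omega
    have hassign : (x0 = s1 ∧ y = s2) ∨ (x0 = s2 ∧ y = s1) := by
      rcases hx0s with h | h <;> rcases hys with h' | h'
      · exact absurd (h.trans h'.symm) hx0y
      · exact Or.inl ⟨h, h'⟩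
      · exact Or.inr ⟨h, h'⟩
      · exact absurd (h.trans h'.symm) hx0y
    have hWsub : W ⊆ {x0, y} := by
      intro z hzW
      by_contra hzout
      simp only [Finset.mem_insert, Finset.mem_singleton] at hzout
      push_neg at hzout
      have hzA : z ∈ A := hWA ▸ hzW
      have hA'ne : (A.erase x0).Nonempty := ⟨z, Finset.mem_erase.mpr ⟨hzout.1, hzA⟩⟩
      obtain ⟨x1, hx1A', hx1min⟩ := Finset.exists_min_image (A.erase x0) (rk v1 v2 l) hA'ne
      obtain ⟨hx1ne, hx1A⟩ := Finset.mem_erase.mp hx1A'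
      by_cases hx1y : x1 = y
      · subst hx1y
        have : z = x1 :=
          rk_inj hab hl (hWV (hAW hzA)) (hWV (hAW hx1A))
            (le_antisymm (hymax z hzA)
              (hx1min z (Finset.mem_erase.mpr ⟨hzout.1, hzA⟩)))
        exact hzout.2 this
      · have hx1s : x1 ≠ s1 ∧ x1 ≠ s2 := by
          rcases hassign with ⟨h1, h2⟩ | ⟨h1, h2⟩
          · exact ⟨fun h => hx1ne (h.trans h1.symm), fun h => hx1y (h.trans h2.symm)⟩
          · exact ⟨fun h => hx1y (h.trans h2.symm), fun h => hx1ne (h.trans h1.symm)⟩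
        obtain ⟨p, hp, hzp, hW1, hW2', hlt1, hlt2, hne⟩ :=
          back_src x1 hx1A hx1s.1 hx1s.2
        have hsrcA : ∀ t, t ∈ W → rk v1 v2 l t < rk v1 v2 l x1 → t = x0 := by
          intro t htW hlt
          have htA : t ∈ A := hWA ▸ htW
          by_contra htx0
          have : t ∈ A.erase x0 := Finset.mem_erase.mpr ⟨htx0, htA⟩
          exact absurd (hx1min t this) (by omega)
        have h1 := hsrcA _ hW1 (hzp ▸ hlt1)
        have h2 := hsrcA _ hW2' (hzp ▸ hlt2)
        exact hne (h1.trans h2.symm)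
    have hWeq : W = {x0, y} := by
      apply Finset.Subset.antisymm hWsub
      intro z hz
      rcases Finset.mem_insert.mp hz with rfl | hz
      · exact hAW hx0A
      · rw [Finset.mem_singleton.mp hz]; exact hAW hyA
    have hWcard : W.card = 2 := by
      rw [hWeq, Finset.card_insert_of_notMem (by simp [hx0y]), Finset.card_singleton]
    have hFcard : F.card = 1 := by omega
    obtain ⟨f, hf⟩ := Finset.card_eq_one.mp hFcard
    have hx0f : x0 ∈ f := by
      obtain ⟨e, he, hx0e⟩ := hcov x0 (hAW hx0A)
      rw [hf, Finset.mem_singleton] at he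
      exact he ▸ hx0e
    have hyf : y ∈ f := by
      obtain ⟨e, he, hye⟩ := hcov y (hAW hyA)
      rw [hf, Finset.mem_singleton] at he
      exact he ▸ hye
    have hfeq : f = s(x0, y) := sym2_eq_of_mem hx0y hx0f hyf
    rcases hassign with ⟨h1, h2⟩ | ⟨h1, h2⟩
    · subst h1; subst h2
      exact ⟨hWeq, by rw [hf, hfeq]⟩
    · subst h1; subst h2
      exact ⟨by rw [hWeq, Finset.pair_comm], by rw [hf, hfeq, Sym2.eq_swap]⟩

end Aux

end Stmt11Aux
namespace Stmt11Aux

variable {α : Type*} [DecidableEq α]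

section Merge

variable {v1 v2 : α} {l : List (α × α × α)}

lemma core_merge (hab : v1 ≠ v2) (hl : ValidFrom {v1, v2} l)
    (u w : α) (huw : u ≠ w)
    (HY : ∀ y ∈ buildVerts v1 v2 l,
      degreeIn (insert s(u, w) ((buildEdges v1 v2 l).erase s(v1, v2))) y = 2 →
      y ≠ u ∧ y ≠ w ∧
        (insert s(u, w) ((buildEdges v1 v2 l).erase s(v1, v2))).filter (fun e => y ∈ e) =
          {s(y, u), s(y, w)})
    (WA WB WC : Finset α) (FA FB FC : Finset (Sym2 α)) (sAB sBC sAC : α)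
    (hd1 : sAB ≠ sBC) (hd2 : sAB ≠ sAC) (hd3 : sBC ≠ sAC)
    (tA : TriDecomp WA FA) (tB : TriDecomp WB FB) (tC : TriDecomp WC FC)
    (iAB : WA ∩ WB = {sAB}) (iBC : WB ∩ WC = {sBC}) (iAC : WA ∩ WC = {sAC})
    (dAB : FA ∩ FB = ∅) (dBC : FB ∩ FC = ∅) (dAC : FA ∩ FC = ∅)
    (hVU : buildVerts v1 v2 l = WA ∪ WB ∪ WC)
    (hEU : insert s(u, w) ((buildEdges v1 v2 l).erase s(v1, v2)) = FA ∪ FB ∪ FC)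
    (hv1A : v1 ∈ WA) (hv2A : v2 ∈ WA) :
    ∃ a, a ∈ buildVerts v1 v2 l ∧ a ≠ v1 ∧ a ≠ v2 ∧ a ≠ u ∧ a ≠ w ∧
      degreeIn (insert s(u, w) ((buildEdges v1 v2 l).erase s(v1, v2))) a = 2 ∧
      TriDecomp ((buildVerts v1 v2 l).erase a)
        (((insert s(u, w) ((buildEdges v1 v2 l).erase s(v1, v2))).erase
          s(a, u)).erase s(a, w)) := by
  classical
  set V := buildVerts v1 v2 l with hV
  set Ee := (buildEdges v1 v2 l).erase s(v1, v2) with hEe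
  set Eh := insert s(u, w) Ee with hEh
  have cardA := td_card tA
  have cardB := td_card tB
  have cardC := td_card tC
  have suppA := td_supp tA
  have suppB := td_supp tB
  have suppC := td_supp tC
  have covB := td_cover tB
  have covC := td_cover tC
  have hWAV : WA ⊆ V := by
    rw [hVU]; exact (Finset.subset_union_left).trans Finset.subset_union_left
  have hWBV : WB ⊆ V := by
    rw [hVU]; exact (Finset.subset_union_right).trans Finset.subset_union_left
  have hWCV : WC ⊆ V := by rw [hVU]; exact Finset.subset_union_right
  have hWA2 : 2 ≤ WA.card := Finset.one_lt_card.mpr ⟨v1, hv1A, v2, hv2A, hab⟩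
  have hFAEh : FA ⊆ Eh := by rw [hEU]; exact Finset.subset_union_left.trans Finset.subset_union_left
  have hFBEh : FB ⊆ Eh := by rw [hEU]; exact Finset.subset_union_right.trans Finset.subset_union_left
  have hFCEh : FC ⊆ Eh := by rw [hEU]; exact Finset.subset_union_right
  -- the extra edge lies in the piece containing both base vertices
  have he_in_FA : s(u, w) ∈ FA := by
    by_contra hcon
    have hFAE : FA ⊆ Ee := by
      intro f hf
      have hfe : f ∈ Eh := hFAEh hf
      rcases Finset.mem_insert.mp hfe with rfl | hfe
      · exact absurd hf hcon
      · exact hfe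
    have hcount := count_le hl hFAE suppA
    have hWAint : WA ∩ (l.map Prod.fst).toFinset = (WA.erase v1).erase v2 := by
      ext z
      simp only [Finset.mem_inter, Finset.mem_erase, List.mem_toFinset]
      constructor
      · rintro ⟨hzW, hzap⟩
        obtain ⟨p, hp, hpz⟩ := List.mem_map.mp hzap
        have hne := apex_ne_base hl hp
        exact ⟨hpz ▸ hne.2, hpz ▸ hne.1, hzW⟩
      · rintro ⟨hz2, hz1, hzW⟩
        refine ⟨hzW, ?_⟩
        rcases mem_V_cases (hWAV hzW) with rfl | rfl | ⟨p, hp, rfl⟩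
        · exact absurd rfl hz1
        · exact absurd rfl hz2
        · exact List.mem_map_of_mem hp
    have hv2e : v2 ∈ WA.erase v1 := Finset.mem_erase.mpr ⟨Ne.symm hab, hv2A⟩
    have hce : ((WA.erase v1).erase v2).card = WA.card - 2 := by
      rw [Finset.card_erase_of_mem hv2e, Finset.card_erase_of_mem hv1A]
      omega
    rw [hWAint, hce] at hcount
    omega
  have hu_WA : u ∈ WA := suppA _ he_in_FA u (Sym2.mem_mk_left _ _)
  have hw_WA : w ∈ WA := suppA _ he_in_FA w (Sym2.mem_mk_right _ _)
  have he_nFB : s(u, w) ∉ FB := by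
    intro h
    have : s(u, w) ∈ FA ∩ FB := Finset.mem_inter.mpr ⟨he_in_FA, h⟩
    rw [dAB] at this
    exact absurd this (Finset.notMem_empty _)
  have he_nFC : s(u, w) ∉ FC := by
    intro h
    have : s(u, w) ∈ FA ∩ FC := Finset.mem_inter.mpr ⟨he_in_FA, h⟩
    rw [dAC] at this
    exact absurd this (Finset.notMem_empty _)
  have hFBE : FB ⊆ Ee := by
    intro f hf
    rcases Finset.mem_insert.mp (hFBEh hf) with rfl | hfe
    · exact absurd hf he_nFB
    · exact hfe
  have hFCE : FC ⊆ Ee := by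
    intro f hf
    rcases Finset.mem_insert.mp (hFCEh hf) with rfl | hfe
    · exact absurd hf he_nFC
    · exact hfe
  -- handle a "bad" low-degree vertex produced by aux_piece
  have badY : ∀ (WP : Finset α) (FP : Finset (Sym2 α)),
      (∀ e ∈ FP, ∀ x ∈ e, x ∈ WP) → WP ⊆ V → WA ∩ WP = {sAB} ∨ WA ∩ WP = {sAC} →
      ¬(∃ y ∈ WP, y ≠ v1 ∧ y ≠ v2 ∧ degreeIn Eh y ≤ 2 ∧
        ∀ e ∈ Eh, y ∈ e → e ∈ FP) := by
    rintro WP FP suppP hWPV hcase ⟨y, hyW, hyv1, hyv2, hydeg, hyall⟩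
    have hyV : y ∈ V := hWPV hyW
    obtain ⟨p, hp, rfl⟩ : ∃ p ∈ l, y = p.1 := by
      rcases mem_V_cases hyV with rfl | rfl | h
      · exact absurd rfl hyv1
      · exact absurd rfl hyv2
      · exact h
    have hpm := pair_mem hl hp
    have hsne := src_ne_apex hl hp
    have hpair_ne : s(p.1, p.2.1) ≠ s(p.1, p.2.2) := by
      intro h
      rcases Sym2.eq_iff.mp h with ⟨_, h2⟩ | ⟨h1, _⟩
      · exact (step_facts hl (List.append_of_mem hp).choose_spec.choose_spec).2.2.2 h2
      · exact hsne.2 h1.symm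
    have hdeg2 : degreeIn Eh p.1 = 2 := by
      have hsub : ({s(p.1, p.2.1), s(p.1, p.2.2)} : Finset (Sym2 α)) ⊆
          Eh.filter (fun e => p.1 ∈ e) := by
        intro f hf
        rcases Finset.mem_insert.mp hf with rfl | hf
        · exact Finset.mem_filter.mpr ⟨Finset.mem_insert_of_mem hpm.1, Sym2.mem_mk_left _ _⟩
        · rw [Finset.mem_singleton] at hf
          subst hf
          exact Finset.mem_filter.mpr ⟨Finset.mem_insert_of_mem hpm.2, Sym2.mem_mk_left _ _⟩
      have h2 : 2 ≤ degreeIn Eh p.1 := by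
        calc 2 = ({s(p.1, p.2.1), s(p.1, p.2.2)} : Finset (Sym2 α)).card := by
              rw [Finset.card_insert_of_notMem (by simp [hpair_ne]), Finset.card_singleton]
          _ ≤ _ := Finset.card_le_card hsub
      omega
    obtain ⟨hyu, hyw, hyfilt⟩ := HY p.1 hyV hdeg2
    have hsu : s(p.1, u) ∈ FP := by
      have : s(p.1, u) ∈ Eh.filter (fun e => p.1 ∈ e) := by
        rw [hyfilt]; exact Finset.mem_insert_self _ _
      obtain ⟨h1, h2⟩ := Finset.mem_filter.mp this
      exact hyall _ h1 h2
    have hsw : s(p.1, w) ∈ FP := by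
      have : s(p.1, w) ∈ Eh.filter (fun e => p.1 ∈ e) := by
        rw [hyfilt]; exact Finset.mem_insert_of_mem (Finset.mem_singleton_self _)
      obtain ⟨h1, h2⟩ := Finset.mem_filter.mp this
      exact hyall _ h1 h2
    have huP : u ∈ WP := suppP _ hsu u (Sym2.mem_mk_right _ _)
    have hwP : w ∈ WP := suppP _ hsw w (Sym2.mem_mk_right _ _)
    have huI : u ∈ WA ∩ WP := Finset.mem_inter.mpr ⟨hu_WA, huP⟩
    have hwI : w ∈ WA ∩ WP := Finset.mem_inter.mpr ⟨hw_WA, hwP⟩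
    rcases hcase with hc | hc <;> rw [hc, Finset.mem_singleton] at huI hwI <;>
      exact huw (huI.trans hwI.symm)
  -- classify piece B
  have hnbB : ¬(v1 ∈ WB ∧ v2 ∈ WB) := by
    rintro ⟨h1, h2⟩
    have e1 : v1 ∈ WA ∩ WB := Finset.mem_inter.mpr ⟨hv1A, h1⟩
    have e2 : v2 ∈ WA ∩ WB := Finset.mem_inter.mpr ⟨hv2A, h2⟩
    rw [iAB, Finset.mem_singleton] at e1 e2
    exact hab (e1.trans e2.symm)
  have h12sB : ∀ x ∈ WB, (x = v1 ∨ x = v2) → x = sAB ∨ x = sBC := by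
    intro x hx hx12
    left
    have hxA : x ∈ WA := by rcases hx12 with rfl | rfl <;> assumption
    have : x ∈ WA ∩ WB := Finset.mem_inter.mpr ⟨hxA, hx⟩
    rw [iAB, Finset.mem_singleton] at this
    exact this
  have houtB : ∀ x ∈ WB, x ≠ sAB → x ≠ sBC → ∀ e ∈ Eh, x ∈ e → e ∈ FB := by
    intro x hx hxs1 hxs2 f hf hxf
    rw [hEU] at hf
    rcases Finset.mem_union.mp hf with hf' | hf'
    · rcases Finset.mem_union.mp hf' with hf'' | hf''
      · exfalso
        have : x ∈ WA ∩ WB := Finset.mem_inter.mpr ⟨suppA _ hf'' x hxf, hx⟩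
        rw [iAB, Finset.mem_singleton] at this
        exact hxs1 this
      · exact hf''
    · exfalso
      have : x ∈ WB ∩ WC := Finset.mem_inter.mpr ⟨hx, suppC _ hf' x hxf⟩
      rw [iBC, Finset.mem_singleton] at this
      exact hxs2 this
  have auxB := aux_piece hab hl u w WB FB sAB sBC hd1 hFBE suppB covB cardB hWBV hnbB
    h12sB houtB
  have hBeq : WB = {sAB, sBC} ∧ FB = {s(sAB, sBC)} := by
    rcases auxB with h | h
    · exact h
    · exact absurd h (badY WB FB suppB hWBV (Or.inl iAB))
  -- classify piece C
  have hnbC : ¬(v1 ∈ WC ∧ v2 ∈ WC) := by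
    rintro ⟨h1, h2⟩
    have e1 : v1 ∈ WA ∩ WC := Finset.mem_inter.mpr ⟨hv1A, h1⟩
    have e2 : v2 ∈ WA ∩ WC := Finset.mem_inter.mpr ⟨hv2A, h2⟩
    rw [iAC, Finset.mem_singleton] at e1 e2
    exact hab (e1.trans e2.symm)
  have h12sC : ∀ x ∈ WC, (x = v1 ∨ x = v2) → x = sAC ∨ x = sBC := by
    intro x hx hx12
    left
    have hxA : x ∈ WA := by rcases hx12 with rfl | rfl <;> assumption
    have : x ∈ WA ∩ WC := Finset.mem_inter.mpr ⟨hxA, hx⟩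
    rw [iAC, Finset.mem_singleton] at this
    exact this
  have houtC : ∀ x ∈ WC, x ≠ sAC → x ≠ sBC → ∀ e ∈ Eh, x ∈ e → e ∈ FC := by
    intro x hx hxs1 hxs2 f hf hxf
    rw [hEU] at hf
    rcases Finset.mem_union.mp hf with hf' | hf'
    · exfalso
      rcases Finset.mem_union.mp hf' with hf'' | hf''
      · have : x ∈ WA ∩ WC := Finset.mem_inter.mpr ⟨suppA _ hf'' x hxf, hx⟩
        rw [iAC, Finset.mem_singleton] at this
        exact hxs1 this
      · have : x ∈ WB ∩ WC := Finset.mem_inter.mpr ⟨suppB _ hf'' x hxf, hx⟩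
        rw [iBC, Finset.mem_singleton] at this
        exact hxs2 this
    · exact hf'
  have auxC := aux_piece hab hl u w WC FC sAC sBC (Ne.symm hd3) hFCE suppC covC cardC
    hWCV hnbC h12sC houtC
  have hCeq : WC = {sAC, sBC} ∧ FC = {s(sAC, sBC)} := by
    rcases auxC with h | h
    · exact h
    · exact absurd h (badY WC FC suppC hWCV (Or.inr iAC))
  obtain ⟨hWBeq, hFBeq⟩ := hBeq
  obtain ⟨hWCeq, hFCeq⟩ := hCeq
  -- the shared vertex a = sBC has degree 2
  have hsAB_A : sAB ∈ WA := by
    have : sAB ∈ WA ∩ WB := by rw [iAB]; exact Finset.mem_singleton_self _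
    exact (Finset.mem_inter.mp this).1
  have hsAC_A : sAC ∈ WA := by
    have : sAC ∈ WA ∩ WC := by rw [iAC]; exact Finset.mem_singleton_self _
    exact (Finset.mem_inter.mp this).1
  have haWB : sBC ∈ WB := by
    rw [hWBeq]; exact Finset.mem_insert_of_mem (Finset.mem_singleton_self _)
  have haV : sBC ∈ V := hWBV haWB
  have haWA : sBC ∉ WA := by
    intro h
    have : sBC ∈ WA ∩ WB := Finset.mem_inter.mpr ⟨h, haWB⟩
    rw [iAB, Finset.mem_singleton] at this
    exact hd1 this.symm
  have hav1 : sBC ≠ v1 := by rintro rfl; exact haWA hv1A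
  have hav2 : sBC ≠ v2 := by rintro rfl; exact haWA hv2A
  have hau : sBC ≠ u := by rintro rfl; exact haWA hu_WA
  have haw : sBC ≠ w := by rintro rfl; exact haWA hw_WA
  have hfilt : Eh.filter (fun e => sBC ∈ e) = {s(sAB, sBC), s(sAC, sBC)} := by
    ext f
    simp only [Finset.mem_filter, Finset.mem_insert, Finset.mem_singleton]
    constructor
    · rintro ⟨hf, haf⟩
      rw [hEU] at hf
      rcases Finset.mem_union.mp hf with hf' | hf'
      · rcases Finset.mem_union.mp hf' with hf'' | hf''
        · exact absurd (suppA _ hf'' sBC haf) haWA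
        · rw [hFBeq, Finset.mem_singleton] at hf''
          exact Or.inl hf''
      · rw [hFCeq, Finset.mem_singleton] at hf'
        exact Or.inr hf'
    · rintro (rfl | rfl)
      · refine ⟨hFBEh (by rw [hFBeq]; exact Finset.mem_singleton_self _),
          Sym2.mem_mk_right _ _⟩
      · refine ⟨hFCEh (by rw [hFCeq]; exact Finset.mem_singleton_self _),
          Sym2.mem_mk_right _ _⟩
  have hdeg : degreeIn Eh sBC = 2 := by
    rw [degreeIn, hfilt]
    rw [Finset.card_insert_of_notMem, Finset.card_singleton]
    rw [Finset.mem_singleton]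
    intro h
    rcases Sym2.eq_iff.mp h with ⟨h1, _⟩ | ⟨h1, _⟩
    · exact hd2 h1
    · exact hd1 h1
  obtain ⟨_, _, hfilt2⟩ := HY sBC haV hdeg
  have hFBC : FB ∪ FC = {s(sBC, u), s(sBC, w)} := by
    rw [hFBeq, hFCeq]
    rw [← hfilt2, hfilt]
    ext f
    simp
  -- piece A is the whole graph minus the vertex sBC
  have hVA : WA = V.erase sBC := by
    ext z
    simp only [Finset.mem_erase]
    constructor
    · intro hz
      exact ⟨fun h => haWA (h ▸ hz), hWAV hz⟩
    · rintro ⟨hzne, hzV⟩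
      rw [hVU] at hzV
      rcases Finset.mem_union.mp hzV with hz' | hz'
      · rcases Finset.mem_union.mp hz' with hz'' | hz''
        · exact hz''
        · rw [hWBeq] at hz''
          rcases Finset.mem_insert.mp hz'' with rfl | hz''
          · exact hsAB_A
          · exact absurd (Finset.mem_singleton.mp hz'') hzne
      · rw [hWCeq] at hz'
        rcases Finset.mem_insert.mp hz' with rfl | hz'
        · exact hsAC_A
        · exact absurd (Finset.mem_singleton.mp hz') hzne
  have hEA : FA = (Eh.erase s(sBC, u)).erase s(sBC, w) := by
    ext f
    simp only [Finset.mem_erase]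
    constructor
    · intro hf
      refine ⟨?_, ?_, hFAEh hf⟩
      · rintro rfl
        exact haWA (suppA _ hf sBC (Sym2.mem_mk_left _ _))
      · rintro rfl
        exact haWA (suppA _ hf sBC (Sym2.mem_mk_left _ _))
    · rintro ⟨hne2, hne1, hf⟩
      rw [hEU] at hf
      rcases Finset.mem_union.mp hf with hf' | hf'
      · rcases Finset.mem_union.mp hf' with hf'' | hf''
        · exact hf''
        · exfalso
          have : f ∈ FB ∪ FC := Finset.mem_union_left _ hf''
          rw [hFBC] at this
          rcases Finset.mem_insert.mp this with rfl | h
          · exact hne1 rfl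
          · exact hne2 (Finset.mem_singleton.mp h)
      · exfalso
        have : f ∈ FB ∪ FC := Finset.mem_union_right _ hf'
        rw [hFBC] at this
        rcases Finset.mem_insert.mp this with rfl | h
        · exact hne1 rfl
        · exact hne2 (Finset.mem_singleton.mp h)
  refine ⟨sBC, haV, hav1, hav2, hau, haw, hdeg, ?_⟩
  rw [← hVA, ← hEA]
  exact tA

end Merge

end Stmt11Aux
namespace Stmt11Aux

variable {α : Type*} [DecidableEq α]

/-- If no piece contains both `b` and `c`, but three distinct apexes are joined to both
`b` and `c`, then `b` lies in at least two pieces. -/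
lemma base_two_pieces
    (V1 V2 V3 : Finset α) (E1 E2 E3 : Finset (Sym2 α)) (c1 c2 c3 : α)
    (s1 : ∀ e ∈ E1, ∀ x ∈ e, x ∈ V1) (s2 : ∀ e ∈ E2, ∀ x ∈ e, x ∈ V2)
    (s3 : ∀ e ∈ E3, ∀ x ∈ e, x ∈ V3)
    (i12 : V1 ∩ V2 = {c3}) (i23 : V2 ∩ V3 = {c1}) (i13 : V1 ∩ V3 = {c2})
    {b c a1 a2 a3 : α}
    (hnb1 : ¬(b ∈ V1 ∧ c ∈ V1)) (hnb2 : ¬(b ∈ V2 ∧ c ∈ V2)) (hnb3 : ¬(b ∈ V3 ∧ c ∈ V3))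
    (hne12 : a1 ≠ a2) (hne13 : a1 ≠ a3) (hne23 : a2 ≠ a3)
    (hb1 : s(a1, b) ∈ E1 ∪ E2 ∪ E3) (hb2 : s(a2, b) ∈ E1 ∪ E2 ∪ E3)
    (hb3 : s(a3, b) ∈ E1 ∪ E2 ∪ E3)
    (hc1 : s(a1, c) ∈ E1 ∪ E2 ∪ E3) (hc2 : s(a2, c) ∈ E1 ∪ E2 ∪ E3)
    (hc3 : s(a3, c) ∈ E1 ∪ E2 ∪ E3) :
    (b ∈ V1 ∧ b ∈ V2) ∨ (b ∈ V1 ∧ b ∈ V3) ∨ (b ∈ V2 ∧ b ∈ V3) := by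
  classical
  by_contra hP
  push_neg at hP
  have key : ∀ x y : α, (a1 = x ∨ a1 = y) → (a2 = x ∨ a2 = y) → (a3 = x ∨ a3 = y) →
      False := by
    intro x y h1 h2 h3
    rcases h1 with h1 | h1 <;> rcases h2 with h2 | h2 <;> rcases h3 with h3 | h3 <;>
      first
        | exact hne12 (h1.trans h2.symm)
        | exact hne13 (h1.trans h3.symm)
        | exact hne23 (h2.trans h3.symm)
  have hbV : b ∈ V1 ∨ b ∈ V2 ∨ b ∈ V3 := by
    rcases Finset.mem_union.mp hb1 with h | h
    · rcases Finset.mem_union.mp h with h' | h'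
      · exact Or.inl (s1 _ h' b (Sym2.mem_mk_right _ _))
      · exact Or.inr (Or.inl (s2 _ h' b (Sym2.mem_mk_right _ _)))
    · exact Or.inr (Or.inr (s3 _ h b (Sym2.mem_mk_right _ _)))
  rcases hbV with hb | hb | hb
  · have hbn2 : b ∉ V2 := hP.1 hb
    have hbn3 : b ∉ V3 := hP.2.1 hb
    have ha : ∀ a : α, s(a, b) ∈ E1 ∪ E2 ∪ E3 → s(a, c) ∈ E1 ∪ E2 ∪ E3 →
        a = c3 ∨ a = c2 := by
      intro a hab hac
      have haV1 : a ∈ V1 := by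
        rcases Finset.mem_union.mp hab with h | h
        · rcases Finset.mem_union.mp h with h' | h'
          · exact s1 _ h' a (Sym2.mem_mk_left _ _)
          · exact absurd (s2 _ h' b (Sym2.mem_mk_right _ _)) hbn2
        · exact absurd (s3 _ h b (Sym2.mem_mk_right _ _)) hbn3
      rcases Finset.mem_union.mp hac with h | h
      · rcases Finset.mem_union.mp h with h' | h'
        · exact absurd ⟨hb, s1 _ h' c (Sym2.mem_mk_right _ _)⟩ hnb1
        · have : a ∈ V1 ∩ V2 :=
            Finset.mem_inter.mpr ⟨haV1, s2 _ h' a (Sym2.mem_mk_left _ _)⟩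
          rw [i12, Finset.mem_singleton] at this
          exact Or.inl this
      · have : a ∈ V1 ∩ V3 :=
          Finset.mem_inter.mpr ⟨haV1, s3 _ h a (Sym2.mem_mk_left _ _)⟩
        rw [i13, Finset.mem_singleton] at this
        exact Or.inr this
    exact key c3 c2 (ha a1 hb1 hc1) (ha a2 hb2 hc2) (ha a3 hb3 hc3)
  · have hbn1 : b ∉ V1 := fun h : b ∈ V1 => hP.1 h hb
    have hbn3 : b ∉ V3 := hP.2.2 hb
    have ha : ∀ a : α, s(a, b) ∈ E1 ∪ E2 ∪ E3 → s(a, c) ∈ E1 ∪ E2 ∪ E3 →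
        a = c3 ∨ a = c1 := by
      intro a hab hac
      have haV2 : a ∈ V2 := by
        rcases Finset.mem_union.mp hab with h | h
        · rcases Finset.mem_union.mp h with h' | h'
          · exact absurd (s1 _ h' b (Sym2.mem_mk_right _ _)) hbn1
          · exact s2 _ h' a (Sym2.mem_mk_left _ _)
        · exact absurd (s3 _ h b (Sym2.mem_mk_right _ _)) hbn3
      rcases Finset.mem_union.mp hac with h | h
      · rcases Finset.mem_union.mp h with h' | h'
        · have : a ∈ V1 ∩ V2 :=
            Finset.mem_inter.mpr ⟨s1 _ h' a (Sym2.mem_mk_left _ _), haV2⟩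
          rw [i12, Finset.mem_singleton] at this
          exact Or.inl this
        · exact absurd ⟨hb, s2 _ h' c (Sym2.mem_mk_right _ _)⟩ hnb2
      · have : a ∈ V2 ∩ V3 :=
          Finset.mem_inter.mpr ⟨haV2, s3 _ h a (Sym2.mem_mk_left _ _)⟩
        rw [i23, Finset.mem_singleton] at this
        exact Or.inr this
    exact key c3 c1 (ha a1 hb1 hc1) (ha a2 hb2 hc2) (ha a3 hb3 hc3)
  · have hbn1 : b ∉ V1 := fun h : b ∈ V1 => hP.2.1 h hb
    have hbn2 : b ∉ V2 := fun h : b ∈ V2 => hP.2.2 h hb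
    have ha : ∀ a : α, s(a, b) ∈ E1 ∪ E2 ∪ E3 → s(a, c) ∈ E1 ∪ E2 ∪ E3 →
        a = c2 ∨ a = c1 := by
      intro a hab hac
      have haV3 : a ∈ V3 := by
        rcases Finset.mem_union.mp hab with h | h
        · rcases Finset.mem_union.mp h with h' | h'
          · exact absurd (s1 _ h' b (Sym2.mem_mk_right _ _)) hbn1
          · exact absurd (s2 _ h' b (Sym2.mem_mk_right _ _)) hbn2
        · exact s3 _ h a (Sym2.mem_mk_left _ _)
      rcases Finset.mem_union.mp hac with h | h
      · rcases Finset.mem_union.mp h with h' | h'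
        · have : a ∈ V1 ∩ V3 :=
            Finset.mem_inter.mpr ⟨s1 _ h' a (Sym2.mem_mk_left _ _), haV3⟩
          rw [i13, Finset.mem_singleton] at this
          exact Or.inl this
        · have : a ∈ V2 ∩ V3 :=
            Finset.mem_inter.mpr ⟨s2 _ h' a (Sym2.mem_mk_left _ _), haV3⟩
          rw [i23, Finset.mem_singleton] at this
          exact Or.inr this
      · exact absurd ⟨hb, s3 _ h c (Sym2.mem_mk_right _ _)⟩ hnb3
    exact key c2 c1 (ha a1 hb1 hc1) (ha a2 hb2 hc2) (ha a3 hb3 hc3)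

end Stmt11Aux
namespace Stmt11Aux

variable {α : Type*} [DecidableEq α]

section Core

variable {v1 v2 : α} {l : List (α × α × α)}

lemma union_rot {β : Type*} [DecidableEq β] (a b c : Finset β) :
    a ∪ b ∪ c = c ∪ a ∪ b := by
  ext x
  simp only [Finset.mem_union]
  tauto

lemma three_onbase (hl : ValidFrom {v1, v2} l)
    (h3 : 3 ≤ l.countP (fun p => decide (OnBase v1 v2 p))) :
    ∃ p1 p2 p3 : α × α × α, p1 ∈ l ∧ p2 ∈ l ∧ p3 ∈ l ∧
      OnBase v1 v2 p1 ∧ OnBase v1 v2 p2 ∧ OnBase v1 v2 p3 ∧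
      p1.1 ≠ p2.1 ∧ p1.1 ≠ p3.1 ∧ p2.1 ≠ p3.1 := by
  classical
  set ob := l.filter (fun p => decide (OnBase v1 v2 p)) with hob
  have hlen : 3 ≤ ob.length := by
    rw [hob, ← List.countP_eq_length_filter]
    exact h3
  obtain ⟨q1, t1, h1⟩ : ∃ q t, ob = q :: t := by
    cases hc : ob with
    | nil => rw [hc] at hlen; simp at hlen
    | cons a b => exact ⟨a, b, rfl⟩
  obtain ⟨q2, t2, h2⟩ : ∃ q t, t1 = q :: t := by
    cases hc : t1 with
    | nil => rw [h1, hc] at hlen; simp at hlen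
    | cons a b => exact ⟨a, b, rfl⟩
  obtain ⟨q3, t3, h3'⟩ : ∃ q t, t2 = q :: t := by
    cases hc : t2 with
    | nil => rw [h1, h2, hc] at hlen; simp at hlen
    | cons a b => exact ⟨a, b, rfl⟩
  have hobl : ob = q1 :: q2 :: q3 :: t3 := by rw [h1, h2, h3']
  have hnd : ob.Nodup := (List.Nodup.of_map _ (apex_nodup hl)).filter _
  rw [hobl] at hnd
  simp only [List.nodup_cons, List.mem_cons] at hnd
  have m1 : q1 ∈ l.filter (fun p => decide (OnBase v1 v2 p)) := by
    rw [← hob, hobl]; exact List.mem_cons_self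
  have m2 : q2 ∈ l.filter (fun p => decide (OnBase v1 v2 p)) := by
    rw [← hob, hobl]; exact List.mem_cons_of_mem _ (List.mem_cons_self)
  have m3 : q3 ∈ l.filter (fun p => decide (OnBase v1 v2 p)) := by
    rw [← hob, hobl]
    exact List.mem_cons_of_mem _ (List.mem_cons_of_mem _ (List.mem_cons_self))
  have hq1 : q1 ∈ l := List.mem_of_mem_filter m1
  have hq2 : q2 ∈ l := List.mem_of_mem_filter m2
  have hq3 : q3 ∈ l := List.mem_of_mem_filter m3
  have hob1 : OnBase v1 v2 q1 := by
    have := List.of_mem_filter m1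
    simpa using this
  have hob2 : OnBase v1 v2 q2 := by
    have := List.of_mem_filter m2
    simpa using this
  have hob3 : OnBase v1 v2 q3 := by
    have := List.of_mem_filter m3
    simpa using this
  have hne12 : q1 ≠ q2 := fun h => hnd.1 (Or.inl h)
  have hne13 : q1 ≠ q3 := fun h => hnd.1 (Or.inr (Or.inl h))
  have hne23 : q2 ≠ q3 := fun h => hnd.2.1 (Or.inl h)
  refine ⟨q1, q2, q3, hq1, hq2, hq3, hob1, hob2, hob3, ?_, ?_, ?_⟩
  · exact fun h => hne12 (step_unique hl hq1 hq2 h)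
  · exact fun h => hne13 (step_unique hl hq1 hq3 h)
  · exact fun h => hne23 (step_unique hl hq2 hq3 h)

lemma onbase_edges (hl : ValidFrom {v1, v2} l) {p : α × α × α} (hp : p ∈ l)
    (hob : OnBase v1 v2 p) :
    s(p.1, v1) ∈ (buildEdges v1 v2 l).erase s(v1, v2) ∧
      s(p.1, v2) ∈ (buildEdges v1 v2 l).erase s(v1, v2) := by
  have hpm := pair_mem hl hp
  rcases hob with ⟨h1, h2⟩ | ⟨h1, h2⟩
  · rw [h1] at hpm; rw [h2] at hpm; exact hpm
  · rw [h1] at hpm; rw [h2] at hpm; exact ⟨hpm.2, hpm.1⟩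

lemma deg_base_ge (hl : ValidFrom {v1, v2} l)
    (h3 : 3 ≤ l.countP (fun p => decide (OnBase v1 v2 p))) :
    3 ≤ degreeIn ((buildEdges v1 v2 l).erase s(v1, v2)) v1 ∧
      3 ≤ degreeIn ((buildEdges v1 v2 l).erase s(v1, v2)) v2 := by
  classical
  obtain ⟨p1, p2, p3, hp1, hp2, hp3, hob1, hob2, hob3, hne12, hne13, hne23⟩ :=
    three_onbase hl h3
  constructor
  · have hsub : ({s(p1.1, v1), s(p2.1, v1), s(p3.1, v1)} : Finset (Sym2 α)) ⊆
        ((buildEdges v1 v2 l).erase s(v1, v2)).filter (fun e => v1 ∈ e) := by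
      intro f hf
      simp only [Finset.mem_insert, Finset.mem_singleton] at hf
      rcases hf with rfl | rfl | rfl
      · exact Finset.mem_filter.mpr ⟨(onbase_edges hl hp1 hob1).1, Sym2.mem_mk_right _ _⟩
      · exact Finset.mem_filter.mpr ⟨(onbase_edges hl hp2 hob2).1, Sym2.mem_mk_right _ _⟩
      · exact Finset.mem_filter.mpr ⟨(onbase_edges hl hp3 hob3).1, Sym2.mem_mk_right _ _⟩
    have hne1 : p1.1 ≠ v1 := (apex_ne_base hl hp1).1
    have hne2 : p2.1 ≠ v1 := (apex_ne_base hl hp2).1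
    have hne3 : p3.1 ≠ v1 := (apex_ne_base hl hp3).1
    have hcard : ({s(p1.1, v1), s(p2.1, v1), s(p3.1, v1)} : Finset (Sym2 α)).card = 3 := by
      rw [Finset.card_insert_of_notMem, Finset.card_insert_of_notMem,
        Finset.card_singleton]
      · rw [Finset.mem_singleton]
        exact sym2_ne_of_ne (fun h => hne23 h.1) (fun h => hne2 h.1)
      · simp only [Finset.mem_insert, Finset.mem_singleton]
        push_neg
        exact ⟨sym2_ne_of_ne (fun h => hne12 h.1) (fun h => hne1 h.1),
          sym2_ne_of_ne (fun h => hne13 h.1) (fun h => hne1 h.1)⟩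
    calc 3 = _ := hcard.symm
      _ ≤ _ := Finset.card_le_card hsub
  · have hsub : ({s(p1.1, v2), s(p2.1, v2), s(p3.1, v2)} : Finset (Sym2 α)) ⊆
        ((buildEdges v1 v2 l).erase s(v1, v2)).filter (fun e => v2 ∈ e) := by
      intro f hf
      simp only [Finset.mem_insert, Finset.mem_singleton] at hf
      rcases hf with rfl | rfl | rfl
      · exact Finset.mem_filter.mpr ⟨(onbase_edges hl hp1 hob1).2, Sym2.mem_mk_right _ _⟩
      · exact Finset.mem_filter.mpr ⟨(onbase_edges hl hp2 hob2).2, Sym2.mem_mk_right _ _⟩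
      · exact Finset.mem_filter.mpr ⟨(onbase_edges hl hp3 hob3).2, Sym2.mem_mk_right _ _⟩
    have hne1 : p1.1 ≠ v2 := (apex_ne_base hl hp1).2
    have hne2 : p2.1 ≠ v2 := (apex_ne_base hl hp2).2
    have hne3 : p3.1 ≠ v2 := (apex_ne_base hl hp3).2
    have hcard : ({s(p1.1, v2), s(p2.1, v2), s(p3.1, v2)} : Finset (Sym2 α)).card = 3 := by
      rw [Finset.card_insert_of_notMem, Finset.card_insert_of_notMem,
        Finset.card_singleton]
      · rw [Finset.mem_singleton]
        exact sym2_ne_of_ne (fun h => hne23 h.1) (fun h => hne2 h.1)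
      · simp only [Finset.mem_insert, Finset.mem_singleton]
        push_neg
        exact ⟨sym2_ne_of_ne (fun h => hne12 h.1) (fun h => hne1 h.1),
          sym2_ne_of_ne (fun h => hne13 h.1) (fun h => hne1 h.1)⟩
    calc 3 = _ := hcard.symm
      _ ≤ _ := Finset.card_le_card hsub

lemma core (hab : v1 ≠ v2) (hl : ValidFrom {v1, v2} l) (hlne : l ≠ [])
    (u w : α) (huw : u ≠ w)
    (huV : u ∈ buildVerts v1 v2 l)
    (h6 : 3 ≤ l.countP (fun p => decide (OnBase v1 v2 p)) ∨ s(u, w) = s(v1, v2))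
    (HY : ∀ y ∈ buildVerts v1 v2 l,
      degreeIn (insert s(u, w) ((buildEdges v1 v2 l).erase s(v1, v2))) y = 2 →
      y ≠ u ∧ y ≠ w ∧
        (insert s(u, w) ((buildEdges v1 v2 l).erase s(v1, v2))).filter (fun e => y ∈ e) =
          {s(y, u), s(y, w)})
    (hdec : TriDecomp (buildVerts v1 v2 l)
      (insert s(u, w) ((buildEdges v1 v2 l).erase s(v1, v2)))) :
    ∃ a, a ∈ buildVerts v1 v2 l ∧ a ≠ v1 ∧ a ≠ v2 ∧ a ≠ u ∧ a ≠ w ∧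
      degreeIn (insert s(u, w) ((buildEdges v1 v2 l).erase s(v1, v2))) a = 2 ∧
      TriDecomp ((buildVerts v1 v2 l).erase a)
        (((insert s(u, w) ((buildEdges v1 v2 l).erase s(v1, v2))).erase
          s(a, u)).erase s(a, w)) := by
  classical
  set V := buildVerts v1 v2 l with hV
  set Ee := (buildEdges v1 v2 l).erase s(v1, v2) with hEe
  set Eh := insert s(u, w) Ee with hEh
  have hVcard : V.card = l.length + 2 := card_buildVerts hab hl
  have hlpos : 1 ≤ l.length := List.length_pos_iff.mpr hlne
  rcases td_cases hdec with ⟨p, q, hpq, hVeq, hEeq⟩ |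
    ⟨p, q, r, hpq, hqr, hpr, hVeq, hEeq⟩ |
    ⟨V1, V2, V3, E1, E2, E3, c1, c2, c3, h12, h23, h13, t1, t2, t3,
      i12, i23, i13, d12, d23, d13, hVeq, hEeq⟩
  · -- single edge: too few vertices
    exfalso
    have h2 : V.card ≤ 2 := by
      rw [hVeq]
      exact (Finset.card_insert_le _ _).trans (by simp)
    omega
  · -- triangle: all three vertices have degree 2, contradicting u ∈ V
    exfalso
    have hpV : p ∈ V := by rw [hVeq]; simp
    have hqV : q ∈ V := by rw [hVeq]; simp
    have hrV : r ∈ V := by rw [hVeq]; simp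
    have hfp : Eh.filter (fun e => p ∈ e) = {s(p, q), s(p, r)} := by
      rw [hEeq]
      ext f
      simp only [Finset.mem_filter, Finset.mem_insert, Finset.mem_singleton]
      constructor
      · rintro ⟨(rfl | rfl | rfl), hm⟩
        · exact Or.inl rfl
        · exfalso
          rcases Sym2.mem_iff.mp hm with h | h
          · exact hpq h
          · exact hpr h
        · exact Or.inr rfl
      · rintro (rfl | rfl)
        · exact ⟨Or.inl rfl, Sym2.mem_mk_left _ _⟩
        · exact ⟨Or.inr (Or.inr rfl), Sym2.mem_mk_left _ _⟩
    have hfq : Eh.filter (fun e => q ∈ e) = {s(p, q), s(q, r)} := by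
      rw [hEeq]
      ext f
      simp only [Finset.mem_filter, Finset.mem_insert, Finset.mem_singleton]
      constructor
      · rintro ⟨(rfl | rfl | rfl), hm⟩
        · exact Or.inl rfl
        · exact Or.inr rfl
        · exfalso
          rcases Sym2.mem_iff.mp hm with h | h
          · exact hpq h.symm
          · exact hqr h
      · rintro (rfl | rfl)
        · exact ⟨Or.inl rfl, Sym2.mem_mk_right _ _⟩
        · exact ⟨Or.inr (Or.inl rfl), Sym2.mem_mk_left _ _⟩
    have hfr : Eh.filter (fun e => r ∈ e) = {s(q, r), s(p, r)} := by
      rw [hEeq]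
      ext f
      simp only [Finset.mem_filter, Finset.mem_insert, Finset.mem_singleton]
      constructor
      · rintro ⟨(rfl | rfl | rfl), hm⟩
        · exfalso
          rcases Sym2.mem_iff.mp hm with h | h
          · exact hpr h.symm
          · exact hqr h.symm
        · exact Or.inl rfl
        · exact Or.inr rfl
      · rintro (rfl | rfl)
        · exact ⟨Or.inr (Or.inl rfl), Sym2.mem_mk_right _ _⟩
        · exact ⟨Or.inr (Or.inr rfl), Sym2.mem_mk_right _ _⟩
    have hdp : degreeIn Eh p = 2 := by
      rw [degreeIn, hfp, Finset.card_insert_of_notMem, Finset.card_singleton]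
      rw [Finset.mem_singleton]
      exact sym2_ne_of_ne (fun h => hqr h.2) (fun h => hpr h.1)
    have hdq : degreeIn Eh q = 2 := by
      rw [degreeIn, hfq, Finset.card_insert_of_notMem, Finset.card_singleton]
      rw [Finset.mem_singleton]
      exact sym2_ne_of_ne (fun h => hpq h.1) (fun h => hpr h.1)
    have hdr : degreeIn Eh r = 2 := by
      rw [degreeIn, hfr, Finset.card_insert_of_notMem, Finset.card_singleton]
      rw [Finset.mem_singleton]
      exact sym2_ne_of_ne (fun h => hpq h.1.symm) (fun h => hqr h.1)
    obtain ⟨hpu, _, _⟩ := HY p hpV hdp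
    obtain ⟨hqu, _, _⟩ := HY q hqV hdq
    obtain ⟨hru, _, _⟩ := HY r hrV hdr
    rw [hVeq] at huV
    simp only [Finset.mem_insert, Finset.mem_singleton] at huV
    rcases huV with rfl | rfl | rfl
    · exact hpu rfl
    · exact hqu rfl
    · exact hru rfl
  · -- merge
    by_cases hB1 : v1 ∈ V1 ∧ v2 ∈ V1
    · exact core_merge hab hl u w huw HY V1 V2 V3 E1 E2 E3 c3 c1 c2
        (Ne.symm h13) (Ne.symm h23) h12 t1 t2 t3 i12 i23 i13 d12 d23 d13
        hVeq hEeq hB1.1 hB1.2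
    by_cases hB2 : v1 ∈ V2 ∧ v2 ∈ V2
    · refine core_merge hab hl u w huw HY V2 V1 V3 E2 E1 E3 c3 c2 c1
        (Ne.symm h23) (Ne.symm h13) (Ne.symm h12) t2 t1 t3
        ((Finset.inter_comm V2 V1).trans i12) i13 i23 ?_ ?_ ?_ ?_ ?_ hB2.1 hB2.2
      · exact (Finset.inter_comm E2 E1).trans d12
      · exact d13
      · exact d23
      · show V = V2 ∪ V1 ∪ V3
        rw [hVeq, Finset.union_comm V1 V2]
      · show Eh = E2 ∪ E1 ∪ E3
        rw [hEeq, Finset.union_comm E1 E2]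
    by_cases hB3 : v1 ∈ V3 ∧ v2 ∈ V3
    · refine core_merge hab hl u w huw HY V3 V1 V2 E3 E1 E2 c2 c3 c1
        h23 (Ne.symm h12) (Ne.symm h13) t3 t1 t2
        ((Finset.inter_comm V3 V1).trans i13) i12
        ((Finset.inter_comm V3 V2).trans i23) ?_ ?_ ?_ ?_ ?_ hB3.1 hB3.2
      · exact (Finset.inter_comm E3 E1).trans d13
      · exact d12
      · exact (Finset.inter_comm E3 E2).trans d23
      · show V = V3 ∪ V1 ∪ V2
        rw [hVeq]
        exact union_rot V1 V2 V3
      · show Eh = E3 ∪ E1 ∪ E2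
        rw [hEeq]
        exact union_rot E1 E2 E3
    · -- no piece contains both base vertices: contradiction
      exfalso
      rcases h6 with h3c | hbase_e
      · obtain ⟨p1, p2, p3, hp1, hp2, hp3, hob1, hob2, hob3, hne12, hne13, hne23⟩ :=
          three_onbase hl h3c
        have hEhE : ∀ f ∈ Ee, f ∈ E1 ∪ E2 ∪ E3 := by
          intro f hf
          rw [← hEeq]
          exact Finset.mem_insert_of_mem hf
        have hb1 := hEhE _ (onbase_edges hl hp1 hob1).1
        have hb2 := hEhE _ (onbase_edges hl hp2 hob2).1
        have hb3 := hEhE _ (onbase_edges hl hp3 hob3).1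
        have hc1 := hEhE _ (onbase_edges hl hp1 hob1).2
        have hc2 := hEhE _ (onbase_edges hl hp2 hob2).2
        have hc3 := hEhE _ (onbase_edges hl hp3 hob3).2
        have P1 := base_two_pieces V1 V2 V3 E1 E2 E3 c1 c2 c3
          (td_supp t1) (td_supp t2) (td_supp t3) i12 i23 i13
          hB1 hB2 hB3 hne12 hne13 hne23 hb1 hb2 hb3 hc1 hc2 hc3
        have hB1' : ¬(v2 ∈ V1 ∧ v1 ∈ V1) := fun h => hB1 ⟨h.2, h.1⟩
        have hB2' : ¬(v2 ∈ V2 ∧ v1 ∈ V2) := fun h => hB2 ⟨h.2, h.1⟩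
        have hB3' : ¬(v2 ∈ V3 ∧ v1 ∈ V3) := fun h => hB3 ⟨h.2, h.1⟩
        have P2 := base_two_pieces V1 V2 V3 E1 E2 E3 c1 c2 c3
          (td_supp t1) (td_supp t2) (td_supp t3) i12 i23 i13
          hB1' hB2' hB3' hne12 hne13 hne23 hc1 hc2 hc3 hb1 hb2 hb3
        rcases P1 with ⟨a1, a2⟩ | ⟨a1, a3⟩ | ⟨a2, a3⟩ <;>
          rcases P2 with ⟨b1, b2⟩ | ⟨b1, b3⟩ | ⟨b2, b3⟩ <;>
          first
            | exact hB1 ⟨‹v1 ∈ V1›, ‹v2 ∈ V1›⟩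
            | exact hB2 ⟨‹v1 ∈ V2›, ‹v2 ∈ V2›⟩
            | exact hB3 ⟨‹v1 ∈ V3›, ‹v2 ∈ V3›⟩
      · have hbe : s(u, w) ∈ Eh := Finset.mem_insert_self _ _
        rw [hEeq] at hbe
        have hv1m : v1 ∈ s(u, w) := by rw [hbase_e]; exact Sym2.mem_mk_left _ _
        have hv2m : v2 ∈ s(u, w) := by rw [hbase_e]; exact Sym2.mem_mk_right _ _
        rcases Finset.mem_union.mp hbe with h | h
        · rcases Finset.mem_union.mp h with h' | h'
          · exact hB1 ⟨td_supp t1 _ h' v1 hv1m, td_supp t1 _ h' v2 hv2m⟩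
          · exact hB2 ⟨td_supp t2 _ h' v1 hv1m, td_supp t2 _ h' v2 hv2m⟩
        · exact hB3 ⟨td_supp t3 _ h v1 hv1m, td_supp t3 _ h v2 hv2m⟩

end Core

end Stmt11Aux
namespace Stmt11Aux

variable {α : Type*} [DecidableEq α]

section Final

variable {v1 v2 : α} {l : List (α × α × α)}

lemma deg_apex_ge2 (hl : ValidFrom {v1, v2} l) {p : α × α × α} (hp : p ∈ l) :
    2 ≤ degreeIn ((buildEdges v1 v2 l).erase s(v1, v2)) p.1 := by
  have hpm := pair_mem hl hp
  have hsne := src_ne_apex hl hp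
  obtain ⟨l1, l2, hsplit⟩ := List.append_of_mem hp
  have hstep := step_facts hl hsplit
  have hpair_ne : s(p.1, p.2.1) ≠ s(p.1, p.2.2) := by
    intro h
    rcases Sym2.eq_iff.mp h with ⟨_, h2⟩ | ⟨h1, _⟩
    · exact hstep.2.2.2 h2
    · exact hsne.2 h1.symm
  have hsub : ({s(p.1, p.2.1), s(p.1, p.2.2)} : Finset (Sym2 α)) ⊆
      ((buildEdges v1 v2 l).erase s(v1, v2)).filter (fun e => p.1 ∈ e) := by
    intro f hf
    rcases Finset.mem_insert.mp hf with rfl | hf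
    · exact Finset.mem_filter.mpr ⟨hpm.1, Sym2.mem_mk_left _ _⟩
    · rw [Finset.mem_singleton] at hf
      subst hf
      exact Finset.mem_filter.mpr ⟨hpm.2, Sym2.mem_mk_left _ _⟩
  calc 2 = ({s(p.1, p.2.1), s(p.1, p.2.2)} : Finset (Sym2 α)).card := by
        rw [Finset.card_insert_of_notMem (by simp [hpair_ne]), Finset.card_singleton]
    _ ≤ _ := Finset.card_le_card hsub

end Final

end Stmt11Aux

open Stmt11Aux in
theorem stmt11_aux_main (v1 v2 : α) (hab : v1 ≠ v2) (l : List (α × α × α))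
    (hl : ValidFrom {v1, v2} l) (hne : l ≠ [])
    (vn u w : α) (hlast : l.getLast hne = (vn, u, w))
    (V : Finset α) (E : Finset (Sym2 α))
    (hV : V = buildVerts v1 v2 l) (hE : E = (buildEdges v1 v2 l).erase s(v1, v2))
    (h1p : OnePath V E v1 v2)
    (h3 : 3 ≤ l.countP (fun p => decide (OnBase v1 v2 p))) :
    ¬ TriDecomp V (insert s(u, w) E) := by
  classical
  subst hV
  subst hE
  intro hdec
  set V := buildVerts v1 v2 l with hV
  set Ee := (buildEdges v1 v2 l).erase s(v1, v2) with hEe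
  set Eh := insert s(u, w) Ee with hEh
  have hVcard : V.card = l.length + 2 := card_buildVerts hab hl
  have hEcard : Ee.card = 2 * l.length := card_Ee hl
  -- the extreme edge is not already present
  have he_notE : s(u, w) ∉ Ee := by
    intro hin
    have hc := td_card hdec
    rw [hEh, Finset.insert_eq_self.mpr hin] at hc
    omega
  -- facts about the last step
  have hmem : (vn, u, w) ∈ l := hlast ▸ List.getLast_mem hne
  have hsplitlast : l = l.dropLast ++ [(vn, u, w)] := by
    conv_lhs => rw [← List.dropLast_append_getLast hne]
    rw [hlast]
  have hstep := step_facts hl (by rw [← hsplitlast] : l = l.dropLast ++ (vn, u, w) :: [])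
  have huw : u ≠ w := hstep.2.2.2
  have hu_mem : u ∈ buildVerts v1 v2 l.dropLast := hstep.2.1
  have hw_mem : w ∈ buildVerts v1 v2 l.dropLast := hstep.2.2.1
  have hvn_nmem : vn ∉ buildVerts v1 v2 l.dropLast := hstep.1
  have hvnu : vn ≠ u := fun h => hvn_nmem (h ▸ hu_mem)
  have hvnw : vn ≠ w := fun h => hvn_nmem (h ▸ hw_mem)
  have hvnbase := apex_ne_base hl hmem
  have hvnV : vn ∈ V := apex_mem_V hmem
  have huV : u ∈ V :=
    vfold_mem_V (l1 := l.dropLast) (l2 := [(vn, u, w)]) hsplitlast hu_mem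
  -- the filter of edges at the last vertex
  have hrkmax : ∀ p ∈ l, rk v1 v2 l p.1 ≤ rk v1 v2 l vn := by
    intro p hp
    obtain ⟨l1, l2, hsplit⟩ := List.append_of_mem hp
    have h1 : rk v1 v2 l p.1 = 2 + l1.length := rk_apex hl hsplit
    have h2 : rk v1 v2 l vn = 2 + l.dropLast.length :=
      rk_apex (p := (vn, u, w)) hl
        (by rw [← hsplitlast] : l = l.dropLast ++ (vn, u, w) :: [])
    have hlen : l.length = l1.length + 1 + l2.length := by
      rw [hsplit]
      simp only [List.length_append, List.length_cons]
      omega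
    rw [h1, h2, List.length_dropLast]
    omega
  have hfilt_vn : Ee.filter (fun e => vn ∈ e) = {s(vn, u), s(vn, w)} := by
    ext f
    simp only [Finset.mem_filter, Finset.mem_insert, Finset.mem_singleton]
    constructor
    · rintro ⟨hf, hvf⟩
      obtain ⟨p, hp, hcase⟩ := edge_at hl hf hvf
      rcases hcase with ⟨hvp, hforms⟩ | ⟨hform, hlt⟩
      · have : p = (vn, u, w) := step_unique hl hp hmem (by rw [← hvp])
        subst this
        exact hforms
      · exact absurd (hrkmax p hp) (by omega)
    · have hpm := pair_mem hl hmem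
      rintro (rfl | rfl)
      · exact ⟨hpm.1, Sym2.mem_mk_left _ _⟩
      · exact ⟨hpm.2, Sym2.mem_mk_left _ _⟩
  have hvn_pair_ne : s(vn, u) ≠ s(vn, w) := by
    intro h
    rcases Sym2.eq_iff.mp h with ⟨_, h2⟩ | ⟨h1, _⟩
    · exact huw h2
    · exact hvnw h1
  have hdeg_vn : degreeIn Ee vn = 2 := by
    rw [degreeIn, hfilt_vn, Finset.card_insert_of_notMem (by simp [hvn_pair_ne]),
      Finset.card_singleton]
  -- one-path: vn is the unique degree-2 vertex
  obtain ⟨x0, hx0P, hx0u⟩ := h1p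
  have hvn_x0 : vn = x0 := hx0u vn ⟨hvnV, hvnbase.1, hvnbase.2, hdeg_vn⟩
  have hdeg_ge3 : ∀ x ∈ V, x ≠ vn → 3 ≤ degreeIn Ee x := by
    intro x hxV hxvn
    rcases mem_V_cases hxV with rfl | rfl | ⟨p, hp, rfl⟩
    · exact (deg_base_ge hl h3).1
    · exact (deg_base_ge hl h3).2
    · have h2 : 2 ≤ degreeIn Ee p.1 := deg_apex_ge2 hl hp
      have hne2 : degreeIn Ee p.1 ≠ 2 := by
        intro hd
        exact hxvn ((hx0u p.1 ⟨hxV, (apex_ne_base hl hp).1, (apex_ne_base hl hp).2,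
          hd⟩).trans hvn_x0.symm)
      omega
  have hmono : ∀ x, degreeIn Ee x ≤ degreeIn Eh x := fun x =>
    degreeIn_mono (Finset.subset_insert _ _) x
  -- the HY hypothesis for the full graph
  have HY : ∀ y ∈ V, degreeIn Eh y = 2 →
      y ≠ u ∧ y ≠ w ∧ Eh.filter (fun e => y ∈ e) = {s(y, u), s(y, w)} := by
    intro y hyV hyd
    have hyu : y ≠ u := by
      rintro rfl
      have h3d : 3 ≤ degreeIn Ee y := hdeg_ge3 y hyV (fun h => hvnu h.symm)
      have := hmono y
      omega
    have hyw : y ≠ w := by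
      rintro rfl
      have h3d : 3 ≤ degreeIn Ee y := hdeg_ge3 y hyV (fun h => hvnw h.symm)
      have := hmono y
      omega
    have hynm : y ∉ s(u, w) := by
      rw [Sym2.mem_iff]
      push_neg
      exact ⟨hyu, hyw⟩
    have hfeq : Eh.filter (fun e => y ∈ e) = Ee.filter (fun e => y ∈ e) := by
      rw [hEh, Finset.filter_insert, if_neg hynm]
    have hyEe : degreeIn Ee y = 2 := by
      rw [degreeIn, ← hfeq]
      exact hyd
    have hyvn : y = vn := by
      by_contra hc
      have := hdeg_ge3 y hyV hc
      omega
    subst hyvn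
    exact ⟨hyu, hyw, by rw [hfeq, hfilt_vn]⟩
  -- apply the structure lemma to the full graph
  obtain ⟨a, haV, hav1, hav2, hau, haw, hadeg, htd'⟩ :=
    core hab hl hne u w huw huV (Or.inl h3) HY hdec
  -- the removed vertex is the last one
  have hanm : a ∉ s(u, w) := by
    rw [Sym2.mem_iff]
    push_neg
    exact ⟨hau, haw⟩
  have haEe : degreeIn Ee a = 2 := by
    have hfeq : Eh.filter (fun e => a ∈ e) = Ee.filter (fun e => a ∈ e) := by
      rw [hEh, Finset.filter_insert, if_neg hanm]
    rw [degreeIn, ← hfeq]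
    exact hadeg
  have havn : vn = a := ((hx0u a ⟨haV, hav1, hav2, haEe⟩).trans hvn_x0.symm).symm
  subst havn
  -- identify the peeled graph
  have hl2 : ValidFrom {v1, v2} (l.dropLast ++ [(vn, u, w)]) := by
    rw [← hsplitlast]; exact hl
  have hl' : ValidFrom {v1, v2} l.dropLast := (valid_append.mp hl2).1
  have hbv_append : buildVerts v1 v2 l = insert vn (buildVerts v1 v2 l.dropLast) := by
    conv_lhs => rw [hsplitlast]
    simp [buildVerts, List.foldl_append]
  have hVpeel : V.erase vn = buildVerts v1 v2 l.dropLast := by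
    rw [hV, hbv_append, Finset.erase_insert hvn_nmem]
  have hbe_append : buildEdges v1 v2 l =
      insert s(vn, u) (insert s(vn, w) (buildEdges v1 v2 l.dropLast)) := by
    conv_lhs => rw [hsplitlast]
    simp [buildEdges, List.foldl_append]
  set Ee' := (buildEdges v1 v2 l.dropLast).erase s(v1, v2) with hEe'
  have hXb : s(vn, u) ≠ s(v1, v2) := by
    intro h
    rcases Sym2.eq_iff.mp h with ⟨h1, _⟩ | ⟨h1, _⟩
    · exact hvnbase.1 h1
    · exact hvnbase.2 h1
  have hYb : s(vn, w) ≠ s(v1, v2) := by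
    intro h
    rcases Sym2.eq_iff.mp h with ⟨h1, _⟩ | ⟨h1, _⟩
    · exact hvnbase.1 h1
    · exact hvnbase.2 h1
  have hEe_split : Ee = insert s(vn, u) (insert s(vn, w) Ee') := by
    rw [hEe, hbe_append, Finset.erase_insert_of_ne hXb, Finset.erase_insert_of_ne hYb]
  have hvn_notin_Ee' : ∀ f ∈ Ee', vn ∉ f := by
    intro f hf hm
    exact hvn_nmem (edge_supp hl' (Finset.mem_of_mem_erase hf) vn hm)
  have hXnE' : s(vn, u) ∉ Ee' := fun h => hvn_notin_Ee' _ h (Sym2.mem_mk_left _ _)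
  have hYnE' : s(vn, w) ∉ Ee' := fun h => hvn_notin_Ee' _ h (Sym2.mem_mk_left _ _)
  have hEe'sub : Ee' ⊆ Ee := by
    rw [hEe_split]
    exact (Finset.subset_insert _ _).trans (Finset.subset_insert _ _)
  have he_nEe' : s(u, w) ∉ Ee' := fun h => he_notE (hEe'sub h)
  have heX : s(u, w) ≠ s(vn, u) := by
    intro h
    have : vn ∈ s(u, w) := by rw [h]; exact Sym2.mem_mk_left _ _
    rcases Sym2.mem_iff.mp this with h' | h'
    · exact hvnu h'
    · exact hvnw h'
  have heY : s(u, w) ≠ s(vn, w) := by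
    intro h
    have : vn ∈ s(u, w) := by rw [h]; exact Sym2.mem_mk_left _ _
    rcases Sym2.mem_iff.mp this with h' | h'
    · exact hvnu h'
    · exact hvnw h'
  have hEpeel : (Eh.erase s(vn, u)).erase s(vn, w) = insert s(u, w) Ee' := by
    ext f
    simp only [Finset.mem_erase, Finset.mem_insert]
    constructor
    · rintro ⟨hfY, hfX, hf⟩
      rw [hEh] at hf
      rcases Finset.mem_insert.mp hf with rfl | hf
      · exact Or.inl rfl
      · rw [hEe_split] at hf
        rcases Finset.mem_insert.mp hf with rfl | hf
        · exact absurd rfl hfX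
        rcases Finset.mem_insert.mp hf with rfl | hf
        · exact absurd rfl hfY
        · exact Or.inr hf
    · rintro (rfl | hf)
      · exact ⟨heY, heX, Finset.mem_insert_self _ _⟩
      · refine ⟨?_, ?_, ?_⟩
        · rintro rfl; exact hYnE' hf
        · rintro rfl; exact hXnE' hf
        · rw [hEh]
          exact Finset.mem_insert_of_mem (hEe'sub hf)
  rw [hVpeel, hEpeel] at htd'
  -- degrees in the peeled graph
  have hdegeq : ∀ y, y ≠ vn → degreeIn (insert s(u, w) Ee') y = degreeIn Ee y := by
    intro y hyvn
    unfold degreeIn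
    rw [hEe_split, Finset.filter_insert, Finset.filter_insert, Finset.filter_insert]
    by_cases hyu : y = u
    · subst hyu
      rw [if_pos (Sym2.mem_mk_left _ _),
        if_pos (by rw [Sym2.mem_iff]; exact Or.inr rfl),
        if_neg (by rw [Sym2.mem_iff]; push_neg; exact ⟨hyvn, huw⟩)]
      rw [Finset.card_insert_of_notMem
          (fun h => he_nEe' (Finset.mem_of_mem_filter _ h)),
        Finset.card_insert_of_notMem
          (fun h => hXnE' (Finset.mem_of_mem_filter _ h))]
    · by_cases hyw : y = w
      · subst hyw
        rw [if_pos (Sym2.mem_mk_right _ _),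
          if_neg (by rw [Sym2.mem_iff]; push_neg; exact ⟨hyvn, fun h => hyu h⟩),
          if_pos (by rw [Sym2.mem_iff]; exact Or.inr rfl)]
        rw [Finset.card_insert_of_notMem
            (fun h => he_nEe' (Finset.mem_of_mem_filter _ h)),
          Finset.card_insert_of_notMem
            (fun h => hYnE' (Finset.mem_of_mem_filter _ h))]
      · rw [if_neg (by rw [Sym2.mem_iff]; push_neg; exact ⟨hyu, hyw⟩),
          if_neg (by rw [Sym2.mem_iff]; push_neg; exact ⟨hyvn, hyu⟩),
          if_neg (by rw [Sym2.mem_iff]; push_neg; exact ⟨hyvn, hyw⟩)]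
  have hdeg3' : ∀ y ∈ buildVerts v1 v2 l.dropLast,
      3 ≤ degreeIn (insert s(u, w) Ee') y := by
    intro y hy
    have hyvn : y ≠ vn := fun h => hvn_nmem (h ▸ hy)
    rw [hdegeq y hyvn]
    refine hdeg_ge3 y ?_ hyvn
    rw [hV, hbv_append]
    exact Finset.mem_insert_of_mem hy
  -- hypotheses of core for the peeled list
  have hlen3 : 3 ≤ l.length := le_trans h3 (List.countP_le_length)
  have hl'ne : l.dropLast ≠ [] := by
    intro h
    have := List.length_dropLast (xs := l)
    rw [h] at this
    simp at this
    omega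
  have h6' : 3 ≤ l.dropLast.countP (fun p => decide (OnBase v1 v2 p)) ∨
      s(u, w) = s(v1, v2) := by
    have h3' : 3 ≤ (l.dropLast ++ [(vn, u, w)]).countP
        (fun p => decide (OnBase v1 v2 p)) := by
      rw [← hsplitlast]; exact h3
    rw [List.countP_append] at h3'
    by_cases hob : OnBase v1 v2 (vn, u, w)
    · right
      rcases hob with ⟨h1, h2⟩ | ⟨h1, h2⟩
      · rw [show u = v1 from h1, show w = v2 from h2]
      · rw [show u = v2 from h1, show w = v1 from h2]
        exact Sym2.eq_swap
    · left
      have : ([(vn, u, w)].countP (fun p => decide (OnBase v1 v2 p))) = 0 := by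
        simp [List.countP_cons, hob]
      omega
  have HY' : ∀ y ∈ buildVerts v1 v2 l.dropLast,
      degreeIn (insert s(u, w) Ee') y = 2 →
      y ≠ u ∧ y ≠ w ∧
        (insert s(u, w) Ee').filter (fun e => y ∈ e) = {s(y, u), s(y, w)} := by
    intro y hy hd
    exact absurd hd (by have := hdeg3' y hy; omega)
  obtain ⟨a', ha'V, _, _, _, _, ha'deg, _⟩ :=
    core hab hl' hl'ne u w huw hu_mem h6' HY' htd'
  have ha'2 : degreeIn (insert s(u, w) Ee') a' = 2 := ha'deg
  have := hdeg3' a' ha'V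
  omega


open Stmt11Aux in
/-- For a 1-path simple 1-dof Henneberg-I graph whose last construction
step is `v_n ◁ (u, w)` and in which at least three vertices are constructed directly on
the base pair, the extreme graph `G ∪ {(u, w)}` is not Triangle-decomposable. -/
theorem stmt11 (v1 v2 : α) (hab : v1 ≠ v2) (l : List (α × α × α))
    (hl : ValidFrom {v1, v2} l) (hne : l ≠ [])
    (vn u w : α) (hlast : l.getLast hne = (vn, u, w))
    (V : Finset α) (E : Finset (Sym2 α))
    (hV : V = buildVerts v1 v2 l) (hE : E = (buildEdges v1 v2 l).erase s(v1, v2))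
    (h1p : OnePath V E v1 v2)
    (h3 : 3 ≤ l.countP (fun p => decide (OnBase v1 v2 p))) :
    ¬ TriDecomp V (insert s(u, w) E) := stmt11_aux_main v1 v2 hab l hl hne vn u w hlast V E hV hE h1p h3
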